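/- arXiv:1007.2010 — 5 statements merged into one kernel-verified Lean document; each statement's English description precedes it below -/
import Mathlib

section
/- Let N be a positive even integer. The kernel of the Schrödinger representation is exactly the subgroup {(p,q,k) ∈ ℤ³ : N divides p, N divides q, and 2N divides k}; that is, W(p,q,k) is the identity operator on the space of functions ℤ/Nℤ → ℂ if and only if N ∣ p, N ∣ q and 2N ∣ k. -/
open Complex

/-- The Schrödinger representation: the operator `W(p,q,k)` acting on functions
`ZMod N → ℂ` by `(W(p,q,k)f)(m) = exp(iπ(k−pq)/N)·exp(−2πi q(m̂−p)/N)·f(m−p)`. -/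
noncomputable def W (N : ℕ) (p q k : ℤ) (f : ZMod N → ℂ) : ZMod N → ℂ :=
  fun m =>
    Complex.exp (Real.pi * Complex.I * ((k : ℂ) - p * q) / N) *
    Complex.exp (-2 * Real.pi * Complex.I * q * ((m.val : ℂ) - p) / N) *
    f (m - (p : ZMod N))

/-- the kernel of the Schrödinger representation: `W(p,q,k)` is the
identity operator on functions `ZMod N → ℂ` iff `N ∣ p`, `N ∣ q` and `2N ∣ k`. -/
theorem schroedinger_rep_kernel (N : ℕ) [NeZero N] (hNeven : Even N) (p q k : ℤ) :
    (∀ f : ZMod N → ℂ, W N p q k f = f) ↔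
      ((N : ℤ) ∣ p ∧ (N : ℤ) ∣ q ∧ (2 * N : ℤ) ∣ k) := by
  obtain ⟨M, hM⟩ := hNeven
  have hN0 : (N : ℂ) ≠ 0 := Nat.cast_ne_zero.mpr (NeZero.ne N)
  have hπ : (Real.pi : ℂ) ≠ 0 := by exact_mod_cast Real.pi_ne_zero
  have hπI : (Real.pi : ℂ) * Complex.I ≠ 0 := mul_ne_zero hπ Complex.I_ne_zero
  have h2πI : (2 : ℂ) * Real.pi * Complex.I ≠ 0 := by
    exact mul_ne_zero (mul_ne_zero two_ne_zero hπ) Complex.I_ne_zero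
  have hN2 : 2 ≤ N := by
    have := NeZero.ne N; omega
  haveI : Fact (1 < N) := ⟨by omega⟩
  have hMZ : (N : ℤ) = M + M := by exact_mod_cast hM
  constructor
  · intro h
    -- Step 1: N ∣ p
    have hδ := congrFun (h (fun m => if m = 0 then 1 else 0)) (p : ZMod N)
    simp only [W, sub_self, eq_self_iff_true, if_true, mul_one] at hδ
    have hp0 : ((p : ZMod N)) = 0 := by
      by_contra hne
      rw [if_neg hne] at hδ
      exact mul_ne_zero (Complex.exp_ne_zero _) (Complex.exp_ne_zero _) hδ
    have hp : (N : ℤ) ∣ p := (ZMod.intCast_zmod_eq_zero_iff_dvd p N).mp hp0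
    -- Step 2: the phase is 1 everywhere (use f = 1)
    have hE : ∀ m : ZMod N,
        Complex.exp (Real.pi * Complex.I * ((k : ℂ) - p * q) / N +
          -2 * Real.pi * Complex.I * q * ((m.val : ℂ) - p) / N) = 1 := by
      intro m
      have hm := congrFun (h 1) m
      simp only [W, Pi.one_apply, mul_one] at hm
      rw [Complex.exp_add]
      exact hm
    obtain ⟨n1, hn1⟩ := Complex.exp_eq_one_iff.mp (hE 1)
    obtain ⟨n0, hn0⟩ := Complex.exp_eq_one_iff.mp (hE 0)
    rw [ZMod.val_one] at hn1
    rw [ZMod.val_zero] at hn0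
    field_simp at hn1 hn0
    -- N ∣ q
    have keyq : (2 : ℂ) * Real.pi * Complex.I * (q : ℂ) =
        (2 : ℂ) * Real.pi * Complex.I * (((n0 - n1) * N : ℤ) : ℂ) := by
      push_cast
      linear_combination ((Real.pi : ℂ) * Complex.I) * (hn0 - hn1)
    have hqz : (q : ℤ) = (n0 - n1) * N := by
      have := mul_left_cancel₀ h2πI keyq
      exact_mod_cast this
    have hq : (N : ℤ) ∣ q := ⟨n0 - n1, by linarith [hqz]⟩
    refine ⟨hp, hq, ?_⟩
    -- 2N ∣ k
    have key3 : (Real.pi : ℂ) * Complex.I * (((k + p * q : ℤ)) : ℂ) =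
        (Real.pi : ℂ) * Complex.I * (((2 * n0 * N : ℤ)) : ℂ) := by
      push_cast
      linear_combination ((Real.pi : ℂ) * Complex.I) * hn0
    have kk : k + p * q = 2 * n0 * N := by
      have := mul_left_cancel₀ hπI key3
      exact_mod_cast this
    obtain ⟨b, hb⟩ := hp
    obtain ⟨c, hc⟩ := hq
    exact ⟨n0 - M * b * c, by linear_combination kk - q * hb - (N : ℤ) * b * hc - (N : ℤ) * b * c * hMZ⟩
  · rintro ⟨hp, hq, hk⟩ f
    obtain ⟨b, hb⟩ := hp
    obtain ⟨c, hc⟩ := hq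
    obtain ⟨a, ha⟩ := hk
    have hp0 : ((p : ZMod N)) = 0 := (ZMod.intCast_zmod_eq_zero_iff_dvd p N).mpr ⟨b, hb⟩
    funext m
    simp only [W, hp0, sub_zero]
    have hone : Complex.exp (Real.pi * Complex.I * ((k : ℂ) - p * q) / N +
        -2 * Real.pi * Complex.I * q * ((m.val : ℂ) - p) / N) = 1 := by
      refine Complex.exp_eq_one_iff.mpr ⟨a + M * b * c - c * (m.val : ℤ), ?_⟩
      have hMc : ((M : ℂ)) + M ≠ 0 := by
        rw [show (M : ℂ) + M = (N : ℂ) by push_cast [hM]; ring]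
        exact hN0
      have hM0 : (M : ℂ) ≠ 0 := by intro h0; apply hMc; rw [h0]; ring
      push_cast [ha, hb, hc, hM]
      field_simp
      ring
    rw [← Complex.exp_add, hone, one_mul]
end

section
/- Let N be a positive even integer and let h = (a b; c d) ∈ SL(2,ℤ). Then there exists a unitary operator ρ(h) on the space of functions ℤ/Nℤ → ℂ (with inner product ⟨f,g⟩ = Σ_m f(m)·conj(g(m))) satisfying the exact Egorov identity ρ(h)∘W(p,q,0)∘ρ(h)⁻¹ = W(ap+bq, cp+dq, 0) for all integers p, q. Moreover ρ(h) is unique up to multiplication by a constant: if A and B are invertible linear operators each satisfying this identity for all p, q, then B = λ·A for some nonzero λ ∈ ℂ. -/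
open Complex Finset

/-- `eN N k = exp(iπ k/N)`. -/
noncomputable def eN (N : ℕ) (k : ℤ) : ℂ := Complex.exp (Real.pi * Complex.I * k / N)

/-- `sg m` is the standard lift of `m : ZMod N` to `ℤ`. -/
def sg {N : ℕ} (m : ZMod N) : ℤ := m.val

lemma eN_add (N : ℕ) (j k : ℤ) : eN N (j + k) = eN N j * eN N k := by
  rw [eN, eN, eN, ← Complex.exp_add]
  congr 1
  push_cast
  ring

lemma eN_zero (N : ℕ) : eN N 0 = 1 := by simp [eN]

lemma eN_ne_zero (N : ℕ) (k : ℤ) : eN N k ≠ 0 := Complex.exp_ne_zero _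

lemma eN_two_N (N : ℕ) [NeZero N] (k : ℤ) : eN N (2 * N * k) = 1 := by
  have hN : (N : ℂ) ≠ 0 := Nat.cast_ne_zero.2 (NeZero.ne N)
  rw [eN, show (Real.pi : ℂ) * Complex.I * ((2 * N * k : ℤ) : ℂ) / N
      = (k : ℤ) * (2 * Real.pi * Complex.I) by push_cast; field_simp]
  exact Complex.exp_int_mul_two_pi_mul_I k

lemma eN_eq_of_dvd (N : ℕ) [NeZero N] {j k : ℤ} (h : (2 * N : ℤ) ∣ j - k) :
    eN N j = eN N k := by
  obtain ⟨t, ht⟩ := h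
  have : j = k + 2 * N * t := by linarith
  rw [this, eN_add, eN_two_N, mul_one]

lemma conj_eN (N : ℕ) (k : ℤ) : (starRingEnd ℂ) (eN N k) = eN N (-k) := by
  rw [eN, eN, ← Complex.exp_conj]
  congr 1
  simp [map_div₀]

/-- Rewriting `W` in terms of `eN`. -/
lemma W_eq (N : ℕ) (p q : ℤ) (f : ZMod N → ℂ) (m : ZMod N) :
    W N p q 0 f m = eN N (-(p * q) + (-2) * q * (sg m - p)) * f (m - (p : ZMod N)) := by
  rw [W, eN_add, eN, eN, sg]
  push_cast
  ring_nf

/-- The basic congruence: `sg (m + x) ≡ sg m + x  (mod N)`. -/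
lemma sg_add (N : ℕ) [NeZero N] (m : ZMod N) (x : ℤ) :
    (N : ℤ) ∣ sg (m + (x : ZMod N)) - (sg m + x) := by
  rw [← ZMod.intCast_zmod_eq_zero_iff_dvd]
  push_cast
  simp [sg, ZMod.natCast_val, ZMod.intCast_cast, ZMod.cast_id]

lemma sg_sub (N : ℕ) [NeZero N] (m : ZMod N) (x : ℤ) :
    (N : ℤ) ∣ sg (m - (x : ZMod N)) - (sg m - x) := by
  have := sg_add N m (-x)
  push_cast at this
  simpa [sub_eq_add_neg] using this

lemma sg_eq (N : ℕ) [NeZero N] {m k : ZMod N} (h : (N:ℤ) ∣ sg m - sg k) : m = k := by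
  have h2 : ((sg m - sg k : ℤ) : ZMod N) = 0 := by
    rwa [ZMod.intCast_zmod_eq_zero_iff_dvd]
  have : (sg m : ZMod N) = (sg k : ZMod N) := by
    push_cast at h2; linear_combination h2
  simpa [sg, ZMod.natCast_val, ZMod.intCast_cast, ZMod.cast_id] using this

section
variable (N : ℕ) [NeZero N]

/-- The Egorov intertwining property. -/
def IsEgorov (a b c d : ℤ) (ρ : (ZMod N → ℂ) ≃ₗ[ℂ] (ZMod N → ℂ)) : Prop :=
  ∀ (p q : ℤ) (f : ZMod N → ℂ),
    ρ (W N p q 0 f) = W N (a * p + b * q) (c * p + d * q) 0 (ρ f)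

/-- Preserving the standard inner product. -/
def IsUnit' (ρ : (ZMod N → ℂ) ≃ₗ[ℂ] (ZMod N → ℂ)) : Prop :=
  ∀ f g : ZMod N → ℂ,
    ∑ m : ZMod N, ρ f m * starRingEnd ℂ (ρ g m) =
      ∑ m : ZMod N, f m * starRingEnd ℂ (g m)

def GoodM (a b c d : ℤ) : Prop :=
  ∃ ρ : (ZMod N → ℂ) ≃ₗ[ℂ] (ZMod N → ℂ), IsUnit' N ρ ∧ IsEgorov N a b c d ρ

variable {N}

lemma goodM_mul {a b c d a' b' c' d' : ℤ} (h1 : GoodM N a b c d) (h2 : GoodM N a' b' c' d') :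
    GoodM N (a*a'+b*c') (a*b'+b*d') (c*a'+d*c') (c*b'+d*d') := by
  obtain ⟨ρ1, hU1, hE1⟩ := h1
  obtain ⟨ρ2, hU2, hE2⟩ := h2
  refine ⟨ρ2.trans ρ1, fun f g => ?_, fun p q f => ?_⟩
  · simpa using (hU1 (ρ2 f) (ρ2 g)).trans (hU2 f g)
  · have := congrArg ρ1 (hE2 p q f)
    simp only [LinearEquiv.trans_apply]
    rw [this, hE1]
    congr 1 <;> ring
    
lemma goodM_inv {a b c d : ℤ} (hdet : a * d - b * c = 1) (h : GoodM N a b c d) :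
    GoodM N d (-b) (-c) a := by
  obtain ⟨ρ, hU, hE⟩ := h
  refine ⟨ρ.symm, fun f g => ?_, fun p q f => ?_⟩
  · conv_rhs => rw [← ρ.apply_symm_apply f, ← ρ.apply_symm_apply g]
    exact (hU (ρ.symm f) (ρ.symm g)).symm
  · have key := hE (d*p + (-b)*q) ((-c)*p + a*q) (ρ.symm f)
    have h1 : a * (d*p + (-b)*q) + b * ((-c)*p + a*q) = p := by linear_combination p * hdet
    have h2 : c * (d*p + (-b)*q) + d * ((-c)*p + a*q) = q := by linear_combination q * hdet
    rw [h1, h2, ρ.apply_symm_apply] at key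
    rw [← key, ρ.symm_apply_apply]

/-- Multiplication by `eN (t
 * sg m ^ 2)`. -/
noncomputable def mulOp (N : ℕ) (t : ℤ) : (ZMod N → ℂ) ≃ₗ[ℂ] (ZMod N → ℂ) where
  toFun f := fun m => eN N (t * sg m ^ 2) * f m
  map_add' f g := by funext m; simp [mul_add]
  map_smul' c f := by funext m; simp [Pi.smul_apply, smul_eq_mul]; ring
  invFun f := fun m => eN N (-(t * sg m ^ 2)) * f m
  left_inv f := by
    funext m
    show eN N (-(t * sg m ^ 2)) * (eN N (t * sg m ^ 2) * f m) = f m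
    rw [← mul_assoc, ← eN_add, neg_add_cancel, eN_zero, one_mul]
  right_inv f := by
    funext m
    show eN N (t * sg m ^ 2) * (eN N (-(t * sg m ^ 2)) * f m) = f m
    rw [← mul_assoc, ← eN_add, add_neg_cancel, eN_zero, one_mul]

lemma goodM_L (hNeven : Even N) (t : ℤ) : GoodM N 1 0 t 1 := by
  obtain ⟨v, hv0⟩ := hNeven
  have hv : (N : ℤ) = 2 * v := by push_cast [hv0]; ring
  refine ⟨mulOp N (-t), fun f g => ?_, fun p q f => ?_⟩
  · refine Finset.sum_congr rfl fun m _ => ?_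
    simp only [mulOp, LinearEquiv.coe_mk]
    show eN N (-t * sg m ^ 2) * f m * (starRingEnd ℂ) (eN N (-t * sg m ^ 2) * g m) = _
    rw [map_mul, conj_eN]
    have h1 : eN N (-t * sg m ^ 2) * eN N (-(-t * sg m ^ 2)) = 1 := by
      rw [← eN_add, add_neg_cancel, eN_zero]
    linear_combination (f m * (starRingEnd ℂ) (g m)) * h1
  · funext m
    have hp : ((1*p + 0*q : ℤ) : ZMod N) = (p : ZMod N) := by push_cast; ring
    simp only [mulOp, LinearEquiv.coe_mk]
    show eN N (-t * sg m ^ 2) * W N p q 0 f m = _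
    rw [W_eq, W_eq, hp]
    obtain ⟨u, hu⟩ := sg_sub N m p
    have hs' : sg (m - (p : ZMod N)) = sg m - p + (2*v) * u := by
      rw [← hv]; linarith
    simp only [LinearMap.coe_mk, AddHom.coe_mk]
    rw [hs']
    rw [← mul_assoc, ← mul_assoc, ← eN_add, ← eN_add]
    congr 1
    apply eN_eq_of_dvd
    rw [hv]
    exact ⟨t*u*(sg m - p) + v*t*u^2, by ring⟩
end

section
variable (N : ℕ) [NeZero N]

lemma sg_nonneg (m : ZMod N) : 0 ≤ sg m := Int.ofNat_nonneg _
lemma sg_lt (m : ZMod N) : sg m < N := by unfold sg; exact_mod_cast ZMod.val_lt m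

/-- The key orthogonality relation. -/
lemma ortho (j k : ZMod N) :
    ∑ n : ZMod N, eN N (2 * (sg j - sg k) * sg n) = if j = k then (N : ℂ) else 0 := by
  have hNC : (N : ℂ) ≠ 0 := Nat.cast_ne_zero.2 (NeZero.ne N)
  set ζ : ℂ := eN N (2 * (sg j - sg k)) with hζ
  have hpow : ∀ n : ZMod N, eN N (2 * (sg j - sg k) * sg n) = ζ ^ (n.val) := by
    intro n
    rw [hζ, eN, eN, ← Complex.exp_nat_mul]
    congr 1
    push_cast [sg]
    ring
  have hrange : ∑ n : ZMod N, eN N (2 * (sg j - sg k) * sg n) = ∑ i ∈ range N, ζ ^ i := by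
    simp only [hpow]
    rw [Finset.sum_nbij' (fun (n : ZMod N) => n.val) (fun (i : ℕ) => (i : ZMod N))] <;>
        (try simp [ZMod.val_lt, ZMod.val_cast_of_lt, Nat.mod_eq_of_lt]) <;>
      (intros; exact Nat.mod_eq_of_lt (by assumption))
  rw [hrange]
  by_cases hjk : j = k
  · subst hjk
    simp [hζ, sub_self, eN_zero]
  · rw [if_neg hjk]
    have hζN : ζ ^ N = 1 := by
      rw [hζ, eN, ← Complex.exp_nat_mul,
        show (N : ℂ) * (Real.pi * I * ((2 * (sg j - sg k) : ℤ) : ℂ) / N)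
          = ((sg j - sg k : ℤ) : ℂ) * (2 * Real.pi * I) by push_cast; field_simp]
      exact Complex.exp_int_mul_two_pi_mul_I (sg j - sg k)
    have hζ1 : ζ ≠ 1 := by
      intro h1
      apply hjk
      rw [hζ, eN] at h1
      obtain ⟨t, ht⟩ := Complex.exp_eq_one_iff.mp h1
      have hπ : (Real.pi : ℂ) ≠ 0 := ofReal_ne_zero.2 Real.pi_ne_zero
      rw [div_eq_iff hNC] at ht
      have h4 : ((Real.pi : ℂ) * I) * (2 * ((sg j - sg k : ℤ) : ℂ))
          = ((Real.pi : ℂ) * I) * ((2 * t) * N) := by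
        push_cast at ht ⊢
        linear_combination ht
      have h5 := mul_left_cancel₀ (mul_ne_zero hπ I_ne_zero) h4
      have h6 : 2 * (sg j - sg k) = 2 * t * N := by exact_mod_cast h5
      exact sg_eq N ⟨t, by linarith⟩
    rw [geom_sum_eq hζ1, hζN, sub_self, zero_div]

/-- normalization constant -/
noncomputable def cN (N : ℕ) : ℂ := ((Real.sqrt N : ℝ) : ℂ)⁻¹

lemma conj_cN : (starRingEnd ℂ) (cN N) = cN N := by
  rw [cN, map_inv₀, Complex.conj_ofReal]

lemma cN_mul_self : cN N * cN N * N = 1 := by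
  have hN0 : (0:ℝ) < N := by exact_mod_cast Nat.pos_of_ne_zero (NeZero.ne N)
  have hs : Real.sqrt N ≠ 0 := ne_of_gt (Real.sqrt_pos.2 hN0)
  have h : ((Real.sqrt N : ℝ) : ℂ) * ((Real.sqrt N : ℝ) : ℂ) = (N : ℂ) := by
    rw [← Complex.ofReal_mul, Real.mul_self_sqrt (le_of_lt hN0)]
    simp
  rw [cN, ← mul_inv, h]
  field_simp
  exact div_self (Nat.cast_ne_zero.2 (NeZero.ne N))

/-- The finite Fourier transform. -/
noncomputable def four (N : ℕ) [NeZero N] : (ZMod N → ℂ) ≃ₗ[ℂ] (ZMod N → ℂ) where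
  toFun f := fun m => cN N * ∑ n : ZMod N, eN N (-2 * sg m * sg n) * f n
  invFun f := fun m => cN N * ∑ n : ZMod N, eN N (2 * sg m * sg n) * f n
  map_add' f g := by
    funext m
    simp only [Pi.add_apply, mul_add, Finset.sum_add_distrib]
  map_smul' c f := by
    funext m
    simp only [Pi.smul_apply, smul_eq_mul, RingHom.id_apply, Finset.mul_sum]
    exact Finset.sum_congr rfl fun n _ => by ring
  left_inv f := by
    funext m
    show cN N * ∑ n : ZMod N, eN N (2 * sg m * sg n) *
      (cN N * ∑ k : ZMod N, eN N (-2 * sg n * sg k) * f k) = f m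
    have step : ∀ n : ZMod N, eN N (2 * sg m * sg n) *
        (cN N * ∑ k : ZMod N, eN N (-2 * sg n * sg k) * f k)
        = ∑ k : ZMod N, cN N * (eN N (2 * sg m * sg n) * eN N (-2 * sg n * sg k)) * f k := by
      intro n
      rw [Finset.mul_sum, Finset.mul_sum]
      exact Finset.sum_congr rfl fun k _ => by ring
    simp only [step]
    rw [Finset.sum_comm, Finset.mul_sum]
    have step2 : ∀ k : ZMod N,
        ∑ n : ZMod N, cN N * (eN N (2 * sg m * sg n) * eN N (-2 * sg n * sg k)) * f k
        = cN N * f k * ∑ n : ZMod N, eN N (2 * (sg m - sg k) * sg n) := by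
      intro k
      rw [Finset.mul_sum]
      refine Finset.sum_congr rfl fun n _ => ?_
      have h1 : eN N (2 * sg m * sg n) * eN N (-2 * sg n * sg k)
          = eN N (2 * (sg m - sg k) * sg n) := by
        rw [← eN_add]; congr 1; ring
      linear_combination (cN N * f k) * h1
    simp only [step2, ortho]
    have step3 : ∀ x : ZMod N, cN N * (cN N * f x * if m = x then (N:ℂ) else 0)
        = if m = x then cN N * cN N * (N:ℂ) * f x else 0 := by
      intro x; split <;> ring
    simp only [step3]
    rw [Finset.sum_ite_eq, if_pos (Finset.mem_univ m)]
    linear_combination (f m) * cN_mul_self N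
  right_inv f := by
    funext m
    show cN N * ∑ n : ZMod N, eN N (-2 * sg m * sg n) *
      (cN N * ∑ k : ZMod N, eN N (2 * sg n * sg k) * f k) = f m
    have step : ∀ n : ZMod N, eN N (-2 * sg m * sg n) *
        (cN N * ∑ k : ZMod N, eN N (2 * sg n * sg k) * f k)
        = ∑ k : ZMod N, cN N * (eN N (-2 * sg m * sg n) * eN N (2 * sg n * sg k)) * f k := by
      intro n
      rw [Finset.mul_sum, Finset.mul_sum]
      exact Finset.sum_congr rfl fun k _ => by ring
    simp only [step]
    rw [Finset.sum_comm, Finset.mul_sum]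
    have step2 : ∀ k : ZMod N,
        ∑ n : ZMod N, cN N * (eN N (-2 * sg m * sg n) * eN N (2 * sg n * sg k)) * f k
        = cN N * f k * ∑ n : ZMod N, eN N (2 * (sg k - sg m) * sg n) := by
      intro k
      rw [Finset.mul_sum]
      refine Finset.sum_congr rfl fun n _ => ?_
      have h1 : eN N (-2 * sg m * sg n) * eN N (2 * sg n * sg k)
          = eN N (2 * (sg k - sg m) * sg n) := by
        rw [← eN_add]; congr 1; ring
      linear_combination (cN N * f k) * h1
    simp only [step2, ortho]
    have step3 : ∀ x : ZMod N, cN N * (cN N * f x * if x = m then (N:ℂ) else 0)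
        = if x = m then cN N * cN N * (N:ℂ) * f x else 0 := by
      intro x; split <;> ring
    simp only [step3]
    rw [Finset.sum_ite_eq', if_pos (Finset.mem_univ m)]
    linear_combination (f m) * cN_mul_self N
end

section
variable (N : ℕ) [NeZero N]

lemma four_apply (f : ZMod N → ℂ) (m : ZMod N) :
    four N f m = cN N * ∑ n : ZMod N, eN N (-2 * sg m * sg n) * f n := rfl

lemma four_symm_apply (f : ZMod N → ℂ) (m : ZMod N) :
    (four N).symm f m = cN N * ∑ n : ZMod N, eN N (2 * sg m * sg n) * f n := rfl

lemma four_egorov : IsEgorov N 0 (-1) 1 0 (four N) := by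
  intro p q f
  funext m
  rw [W_eq]
  simp only [four_apply, W_eq]
  rw [Finset.mul_sum, Finset.mul_sum, Finset.mul_sum]
  rw [← Equiv.sum_comp (Equiv.subRight ((p : ZMod N)))
    (fun n => eN N (-(( 0*p + -1*q) * (1*p + 0*q)) + -2 * (1*p + 0*q) * (sg m - (0*p + -1*q))) *
      (cN N * (eN N (-2 * sg (m - ((0*p + -1*q : ℤ) : ZMod N)) * sg n) * f n)))]
  refine Finset.sum_congr rfl fun n _ => ?_
  simp only [Equiv.subRight_apply]
  obtain ⟨u, hu⟩ := sg_sub N n p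
  obtain ⟨w, hw⟩ := sg_sub N m (0*p + -1*q)
  have h1 : eN N (-2 * sg m * sg n) * eN N (-(p * q) + -2 * q * (sg n - p))
      = eN N (-((0*p + -1*q) * (1*p + 0*q)) + -2 * (1*p + 0*q) * (sg m - (0*p + -1*q))) *
        eN N (-2 * sg (m - ((0*p + -1*q : ℤ) : ZMod N)) * sg (n - (p : ZMod N))) := by
    rw [← eN_add, ← eN_add]
    apply eN_eq_of_dvd
    rw [show sg (n - (p : ZMod N)) = sg n - p + N * u from by linarith,
      show sg (m - ((0*p + -1*q : ℤ) : ZMod N)) = sg m - (0*p + -1*q) + N * w from by linarith]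
    exact ⟨u * (sg m + q) + w * (sg n - p) + N * w * u, by ring⟩
  linear_combination (cN N * f (n - (p : ZMod N))) * h1

lemma conj_four (g : ZMod N → ℂ) (m : ZMod N) :
    (starRingEnd ℂ) (four N g m) = (four N).symm (fun k => (starRingEnd ℂ) (g k)) m := by
  rw [four_apply, four_symm_apply, map_mul, conj_cN, map_sum]
  congr 1
  refine Finset.sum_congr rfl fun n _ => ?_
  rw [map_mul, conj_eN, show -(-2 * sg m * sg n) = 2 * sg m * sg n from by ring]

lemma four_transpose (u v : ZMod N → ℂ) :
    ∑ m : ZMod N, four N u m * v m = ∑ m : ZMod N, u m * four N v m := by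
  simp only [four_apply]
  have L : ∀ m : ZMod N, (cN N * ∑ n : ZMod N, eN N (-2 * sg m * sg n) * u n) * v m
      = ∑ n : ZMod N, cN N * (eN N (-2 * sg m * sg n) * u n * v m) := by
    intro m
    rw [mul_assoc, Finset.sum_mul, Finset.mul_sum]
  have R : ∀ m : ZMod N, u m * (cN N * ∑ n : ZMod N, eN N (-2 * sg m * sg n) * v n)
      = ∑ n : ZMod N, cN N * (eN N (-2 * sg m * sg n) * v n * u m) := by
    intro m
    rw [Finset.mul_sum, Finset.mul_sum]
    exact Finset.sum_congr rfl fun n _ => by ring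
  simp only [L, R]
  rw [Finset.sum_comm]
  refine Finset.sum_congr rfl fun n _ => Finset.sum_congr rfl fun m _ => ?_
  rw [show eN N (-2 * sg m * sg n) = eN N (-2 * sg n * sg m) from by congr 1; ring]
  ring

lemma four_unitary : IsUnit' N (four N) := by
  intro f g
  have h1 : ∀ m : ZMod N, four N f m * (starRingEnd ℂ) (four N g m)
      = four N f m * (four N).symm (fun k => (starRingEnd ℂ) (g k)) m := by
    intro m; rw [conj_four]
  simp only [h1]
  rw [four_transpose]
  refine Finset.sum_congr rfl fun m _ => ?_
  rw [LinearEquiv.apply_symm_apply]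
end

lemma goodM_S {N : ℕ} [NeZero N] : GoodM N 0 (-1) 1 0 :=
  ⟨four N, four_unitary N, four_egorov N⟩

section
variable (N : ℕ) [NeZero N]

/-- injectivity of `eN` modulo `2N`. -/
lemma eN_inj {j k : ℤ} (h : eN N j = eN N k) : (2 * N : ℤ) ∣ j - k := by
  have hNC : (N : ℂ) ≠ 0 := Nat.cast_ne_zero.2 (NeZero.ne N)
  have h1 : eN N (j - k) = 1 := by
    have := eN_add N (j - k) k
    rw [sub_add_cancel, h] at this
    field_simp [eN_ne_zero N k] at this
    exact this.symm
  rw [eN] at h1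
  obtain ⟨t, ht⟩ := Complex.exp_eq_one_iff.mp h1
  have hπ : (Real.pi : ℂ) ≠ 0 := ofReal_ne_zero.2 Real.pi_ne_zero
  rw [div_eq_iff hNC] at ht
  have h4 : ((Real.pi : ℂ) * I) * ((j : ℂ) - k) = ((Real.pi : ℂ) * I) * ((2 * t) * N) := by
    push_cast at ht ⊢
    linear_combination ht
  have h5 := mul_left_cancel₀ (mul_ne_zero hπ I_ne_zero) h4
  have h6 : j - k = 2 * t * N := by exact_mod_cast h5
  exact ⟨t, by linarith⟩

lemma W010 (f : ZMod N → ℂ) (m : ZMod N) : W N 0 1 0 f m = eN N (-2 * sg m) * f m := by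
  rw [W_eq, show ((0 : ℤ) : ZMod N) = 0 from by norm_cast,
    show -((0:ℤ) * 1) + (-2) * 1 * (sg m - 0) = -2 * sg m from by ring, sub_zero]

lemma W100 (f : ZMod N → ℂ) (m : ZMod N) : W N 1 0 0 f m = f (m - 1) := by
  rw [W_eq, show -((1:ℤ) * 0) + (-2) * 0 * (sg m - 1) = 0 from by ring, eN_zero, one_mul,
    show ((1 : ℤ) : ZMod N) = 1 from by norm_cast]

/-- Schur-type uniqueness. -/
lemma schur {a b c d : ℤ} (A B : (ZMod N → ℂ) ≃ₗ[ℂ] (ZMod N → ℂ))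
    (hA : IsEgorov N a b c d A) (hB : IsEgorov N a b c d B) :
    ∃ lam : ℂ, lam ≠ 0 ∧ ∀ f : ZMod N → ℂ, B f = lam • A f := by
  set C : (ZMod N → ℂ) ≃ₗ[ℂ] (ZMod N → ℂ) := B.trans A.symm with hC0
  have hC : ∀ (p q : ℤ) (f : ZMod N → ℂ), C (W N p q 0 f) = W N p q 0 (C f) := by
    intro p q f
    have h1 : A.symm (W N (a*p+b*q) (c*p+d*q) 0 (B f)) = W N p q 0 (A.symm (B f)) := by
      have := hA p q (A.symm (B f))
      rw [LinearEquiv.apply_symm_apply] at this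
      rw [← this, LinearEquiv.symm_apply_apply]
    show A.symm (B (W N p q 0 f)) = W N p q 0 (A.symm (B f))
    rw [hB p q f, h1]
  set dl : ZMod N → (ZMod N → ℂ) := fun n => Pi.single n (1 : ℂ) with hdl
  -- off-diagonal entries vanish
  have hdiag : ∀ n m : ZMod N, m ≠ n → C (dl n) m = 0 := by
    intro n m hmn
    have hW : W N 0 1 0 (dl n) = eN N (-2 * sg n) • dl n := by
      funext m'
      rw [W010]
      by_cases h : m' = n
      · subst h; simp [hdl]
      · simp [hdl, Pi.single_eq_of_ne h]
    have := congrFun (hC 0 1 (dl n)) m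
    rw [hW, map_smul, W010] at this
    have h2 : (eN N (-2 * sg n) - eN N (-2 * sg m)) * C (dl n) m = 0 := by
      simp only [Pi.smul_apply, smul_eq_mul] at this
      linear_combination this
    rcases mul_eq_zero.mp h2 with h3 | h3
    · exfalso
      have h4 : eN N (-2 * sg n) = eN N (-2 * sg m) := sub_eq_zero.mp h3
      obtain ⟨t, ht⟩ := eN_inj N h4
      exact hmn (sg_eq N ⟨t, by linarith⟩)
    · exact h3
  -- shift relation
  have hshift : ∀ n : ZMod N, ∀ m : ZMod N, C (dl (n + 1)) m = C (dl n) (m - 1) := by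
    intro n m
    have hW : W N 1 0 0 (dl n) = dl (n + 1) := by
      funext m'
      rw [W100]
      by_cases h : m' = n + 1
      · subst h; simp [hdl]
      · have h2 : m' - 1 ≠ n := fun hcon => h (by rw [← hcon]; ring)
        simp [hdl, Pi.single_eq_of_ne h2, Pi.single_eq_of_ne h]
    have := congrFun (hC 1 0 (dl n)) m
    rw [hW, W100] at this
    exact this
  set lam : ℂ := C (dl 0) 0 with hlam
  have hdiagconst : ∀ n : ZMod N, C (dl n) n = lam := by
    have hnat : ∀ k : ℕ, C (dl (k : ZMod N)) (k : ZMod N) = lam := by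
      intro k
      induction k with
      | zero => simp [hlam]
      | succ k ih =>
        push_cast
        rw [hshift, add_sub_cancel_right, ih]
    intro n
    have : ((n.val : ℕ) : ZMod N) = n := by
      simp [ZMod.natCast_val, ZMod.cast_id]
    rw [← this]
    exact hnat n.val
  have hCd : ∀ n : ZMod N, C (dl n) = lam • dl n := by
    intro n
    funext m
    by_cases h : m = n
    · subst h; rw [hdiagconst]; simp [hdl]
    · rw [hdiag n m h]; simp [hdl, Pi.single_eq_of_ne h]
  have hCf : ∀ f : ZMod N → ℂ, C f = lam • f := by
    intro f
    have hf : f = ∑ n : ZMod N, f n • dl n := by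
      funext j
      rw [Finset.sum_apply]
      simp [hdl, Pi.single_apply]
    calc C f = C (∑ n : ZMod N, f n • dl n) := by rw [← hf]
    _ = ∑ n : ZMod N, f n • C (dl n) := by rw [map_sum]; simp [map_smul]
    _ = ∑ n : ZMod N, f n • (lam • dl n) := by simp only [hCd]
    _ = lam • ∑ n : ZMod N, f n • dl n := by
        rw [Finset.smul_sum]
        exact Finset.sum_congr rfl fun n _ => smul_comm _ _ _
    _ = lam • f := by rw [← hf]
  have hlam0 : lam ≠ 0 := by
    intro h0
    have h1 : C (dl 0) = 0 := by rw [hCf, h0, zero_smul]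
    have h2 : dl 0 = 0 := by
      have := C.injective (h1.trans (map_zero C).symm)
      exact this
    have := congrFun h2 0
    simp [hdl] at this
  refine ⟨lam, hlam0, fun f => ?_⟩
  have : A.symm (B f) = lam • f := hCf f
  calc B f = A (A.symm (B f)) := by rw [LinearEquiv.apply_symm_apply]
  _ = A (lam • f) := by rw [this]
  _ = lam • A f := by rw [map_smul]
end

section
variable {N : ℕ} [NeZero N]

lemma GoodM.congr {a b c d a' b' c' d' : ℤ} (h : GoodM N a b c d)
    (ha : a' = a) (hb : b' = b) (hc : c' = c) (hd : d' = d) : GoodM N a' b' c' d' := by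
  subst ha; subst hb; subst hc; subst hd; exact h

lemma goodM_Sinv : GoodM N 0 1 (-1) 0 :=
  (goodM_inv (by norm_num) goodM_S).congr (by norm_num) (by norm_num) (by norm_num) (by norm_num)

lemma goodM_T (hNeven : Even N) (t : ℤ) : GoodM N 1 t 0 1 :=
  (goodM_mul (goodM_mul goodM_S (goodM_L hNeven (-t))) goodM_Sinv).congr
    (by ring) (by ring) (by ring) (by ring)

lemma goodM_negI : GoodM N (-1) 0 0 (-1) :=
  (goodM_mul goodM_S goodM_S).congr (by norm_num) (by norm_num) (by norm_num) (by norm_num)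

lemma goodM_all (hNeven : Even N) (a b c d : ℤ) (hdet : a * d - b * c = 1) :
    GoodM N a b c d := by
  suffices H : ∀ n : ℕ, ∀ a b c d : ℤ, c.natAbs = n → a * d - b * c = 1 → GoodM N a b c d from
    H c.natAbs a b c d rfl hdet
  intro n
  induction n using Nat.strong_induction_on with
  | _ n IH =>
    intro a b c d hn hdet
    by_cases hc : c = 0
    · subst hc
      rcases Int.eq_one_or_neg_one_of_mul_eq_one' (by linarith : a * d = 1) with ⟨ha, hd⟩ | ⟨ha, hd⟩
      · subst ha; subst hd
        exact (goodM_T hNeven b).congr rfl rfl rfl rfl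
      · subst ha; subst hd
        exact (goodM_mul goodM_negI (goodM_T hNeven (-b))).congr
          (by ring) (by ring) (by ring) (by ring)
    · set k := a / c with hk
      set r := a % c with hr0
      have hr : r = a - c * k := by rw [hr0, hk, Int.emod_def]
      have habs : r.natAbs < n := by
        have h1 : 0 ≤ r := Int.emod_nonneg a hc
        have h2 : r < |c| := by have := Int.emod_lt a hc; rw [Int.abs_eq_natAbs]; exact this
        rw [Int.abs_eq_natAbs] at h2
        omega
      have hdet' : (-c) * (b - k * d) - (-d) * r = 1 := by
        rw [hr]; linear_combination hdet
      have hM := IH r.natAbs habs (-c) (-d) r (b - k * d) rfl hdet'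
      exact (goodM_mul (goodM_T hNeven k) (goodM_mul goodM_Sinv hM)).congr
        (by rw [hr]; ring) (by ring) (by ring) (by ring)
end


/-- for `h = (a b; c d) ∈ SL(2,ℤ)` there exists a unitary operator
`ρ(h)` on `ZMod N → ℂ` satisfying the exact Egorov identity
`ρ(h)∘W(p,q,0)∘ρ(h)⁻¹ = W(ap+bq, cp+dq, 0)`, and `ρ(h)` is unique up to a constant. -/
theorem egorov_exists_unique (N : ℕ) [NeZero N] (hNeven : Even N)
    (a b c d : ℤ) (h : a * d - b * c = 1) :
    (∃ ρ : (ZMod N → ℂ) ≃ₗ[ℂ] (ZMod N → ℂ),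
      (∀ f g : ZMod N → ℂ,
        ∑ m : ZMod N, ρ f m * starRingEnd ℂ (ρ g m) =
          ∑ m : ZMod N, f m * starRingEnd ℂ (g m)) ∧
      (∀ (p q : ℤ) (f : ZMod N → ℂ),
        ρ (W N p q 0 f) = W N (a * p + b * q) (c * p + d * q) 0 (ρ f))) ∧
    (∀ A B : (ZMod N → ℂ) ≃ₗ[ℂ] (ZMod N → ℂ),
      (∀ (p q : ℤ) (f : ZMod N → ℂ),
        A (W N p q 0 f) = W N (a * p + b * q) (c * p + d * q) 0 (A f)) →
      (∀ (p q : ℤ) (f : ZMod N → ℂ),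
        B (W N p q 0 f) = W N (a * p + b * q) (c * p + d * q) 0 (B f)) →
      ∃ lam : ℂ, lam ≠ 0 ∧ ∀ f : ZMod N → ℂ, B f = lam • A f) := by
  constructor
  · obtain ⟨ρ, hU, hE⟩ := goodM_all (N := N) hNeven a b c d h
    exact ⟨ρ, hU, hE⟩
  · intro A B hA hB
    exact schur N A B hA hB
end

section
/- Let N be a positive even integer and set F = N^{−1/2}·Σ_{j=0}^{N−1} exp(iπj²/N)·W(0,j,0), a linear operator on the space of functions ℤ/Nℤ → ℂ. Then F is unitary with respect to the inner product ⟨f,g⟩ = Σ_m f(m)·conj(g(m)), and F satisfies the exact Egorov identity for the positive twist T = (1 1; 0 1): F∘W(p,q,0) = W(p, p+q, 0)∘F for all integers p, q. -/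
open Complex

/-- The operator `F = N^{−1/2}·Σ_{j=0}^{N−1} exp(iπj²/N)·W(0,j,0)` quantizing the
positive twist `T` of the torus. -/
noncomputable def Ftwist (N : ℕ) (f : ZMod N → ℂ) : ZMod N → ℂ :=
  fun m =>
    (1 / Real.sqrt N : ℂ) *
      ∑ j ∈ Finset.range N,
        Complex.exp (Real.pi * Complex.I * (j : ℂ) ^ 2 / N) * W N 0 (j : ℤ) 0 f m

noncomputable def Eop (N : ℕ) (a : ℤ) : ℂ := Complex.exp (Real.pi * Complex.I * a / N)

lemma Eop_add (N : ℕ) (a b : ℤ) : Eop N (a + b) = Eop N a * Eop N b := by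
  rw [Eop, Eop, Eop, ← Complex.exp_add]; congr 1; push_cast; ring

lemma Eop_zero (N : ℕ) : Eop N 0 = 1 := by
  simp [Eop]

lemma Eop_period (N : ℕ) [NeZero N] (a b : ℤ) (h : (2 * (N : ℤ)) ∣ (a - b)) :
    Eop N a = Eop N b := by
  obtain ⟨t, ht⟩ := h
  have ha : a = b + 2 * N * t := by linarith
  subst ha
  rw [Eop_add]
  have hN : (N : ℂ) ≠ 0 := Nat.cast_ne_zero.mpr (NeZero.ne N)
  have harg : (Real.pi * Complex.I * ((2 * (N:ℤ) * t : ℤ) : ℂ) / N) = t * (2 * Real.pi * Complex.I) := by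
    push_cast; field_simp
  simp only [Eop]
  rw [harg, Complex.exp_int_mul_two_pi_mul_I, mul_one]

lemma sq_dvd (N : ℕ) (hNeven : Even N) (a b : ℤ) (h : (N : ℤ) ∣ a - b) :
    (2 * (N : ℤ)) ∣ a ^ 2 - b ^ 2 := by
  obtain ⟨t, ht⟩ := h
  obtain ⟨w, hw⟩ := hNeven
  have hNZ : (N : ℤ) = 2 * w := by exact_mod_cast hw.trans (two_mul w).symm
  refine ⟨b * t + w * t ^ 2, ?_⟩
  have ha : a = b + N * t := by linarith
  subst ha
  rw [hNZ]; ring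

lemma sq_period (N : ℕ) [NeZero N] (hNeven : Even N) (a b : ℤ) (h : (N : ℤ) ∣ a - b) :
    Eop N (a ^ 2) = Eop N (b ^ 2) :=
  Eop_period N _ _ (sq_dvd N hNeven a b h)

lemma val_coe_dvd (N : ℕ) [NeZero N] (x : ZMod N) (c : ℤ) (h : (c : ZMod N) = x) :
    (N : ℤ) ∣ (x.val : ℤ) - c := by
  rw [← ZMod.intCast_zmod_eq_zero_iff_dvd, Int.cast_sub, Int.cast_natCast, ZMod.natCast_val,
    ZMod.cast_id, h, sub_self]

lemma val_sub_dvd (N : ℕ) [NeZero N] (b : ℤ) :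
    (N : ℤ) ∣ b - ((b : ZMod N).val : ℤ) :=
  dvd_sub_comm.mp (val_coe_dvd N (b : ZMod N) b rfl)

lemma sum_range_zmod (N : ℕ) [NeZero N] (h : ZMod N → ℂ) :
    ∑ j ∈ Finset.range N, h (j : ZMod N) = ∑ x : ZMod N, h x := by
  refine Finset.sum_nbij' (fun j => (j : ZMod N)) (fun x => x.val)
    (fun a _ => Finset.mem_univ _) (fun x _ => Finset.mem_range.mpr (ZMod.val_lt x))
    (fun a ha => ZMod.val_natCast_of_lt (Finset.mem_range.mp ha))
    (fun x _ => by show ((x.val : ℕ) : ZMod N) = x; rw [ZMod.natCast_val, ZMod.cast_id]) (fun a _ => rfl)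

noncomputable def Gsum (N : ℕ) [NeZero N] : ℂ := ∑ x : ZMod N, Eop N ((x.val : ℤ) ^ 2)

lemma shift_sum (N : ℕ) [NeZero N] (hNeven : Even N) (a : ℤ) :
    ∑ j ∈ Finset.range N, Eop N (((j : ℤ) - a) ^ 2) = Gsum N := by
  calc ∑ j ∈ Finset.range N, Eop N (((j : ℤ) - a) ^ 2)
      = ∑ j ∈ Finset.range N, (fun x : ZMod N => Eop N ((((x - a) : ZMod N).val : ℤ) ^ 2)) ((j : ℕ) : ZMod N) := by
        refine Finset.sum_congr rfl (fun j _ => ?_)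
        show Eop N (((j : ℤ) - a) ^ 2) = Eop N (((((j : ℕ) : ZMod N) - a).val : ℤ) ^ 2)
        apply sq_period N hNeven
        exact dvd_sub_comm.mp (val_coe_dvd N _ ((j : ℤ) - a) (by push_cast; ring))
    _ = ∑ x : ZMod N, Eop N ((((x - a) : ZMod N).val : ℤ) ^ 2) :=
        sum_range_zmod N (fun x : ZMod N => Eop N ((((x - a) : ZMod N).val : ℤ) ^ 2))
    _ = Gsum N := Fintype.sum_equiv (Equiv.subRight ((a : ℤ) : ZMod N)) _ _ (fun x => rfl)

lemma S_eq (N : ℕ) [NeZero N] (hNeven : Even N) (v : ℤ) :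
    ∑ j ∈ Finset.range N, Eop N ((j : ℤ) ^ 2 - 2 * j * v) = Gsum N * Eop N (-v ^ 2) := by
  have h1 : ∀ j ∈ Finset.range N,
      Eop N ((j : ℤ) ^ 2 - 2 * j * v) = Eop N (((j : ℤ) - v) ^ 2) * Eop N (-v ^ 2) := by
    intro j _
    rw [← Eop_add]; congr 1; ring
  rw [Finset.sum_congr rfl h1, ← Finset.sum_mul, shift_sum N hNeven]

lemma Eop_conj (N : ℕ) (a : ℤ) : starRingEnd ℂ (Eop N a) = Eop N (-a) := by
  rw [Eop, Eop, ← Complex.exp_conj]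
  congr 1
  simp only [map_div₀, map_mul, Complex.conj_I, map_intCast, map_natCast, Complex.conj_ofReal]
  push_cast; ring

lemma gauss_norm (N : ℕ) [NeZero N] (hNeven : Even N) :
    Gsum N * starRingEnd ℂ (Gsum N) = N := by
  have hN : (N : ℂ) ≠ 0 := Nat.cast_ne_zero.mpr (NeZero.ne N)
  rw [Gsum, map_sum, Finset.sum_mul_sum]
  have h1 : ∀ x y : ZMod N,
      Eop N ((x.val : ℤ)^2) * starRingEnd ℂ (Eop N ((y.val : ℤ)^2))
        = Eop N ((x.val : ℤ)^2 - (y.val:ℤ)^2) := by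
    intro x y
    rw [Eop_conj, ← Eop_add]; congr 1
  simp only [h1]
  rw [Finset.sum_comm]
  have h2 : ∀ y : ZMod N, ∑ x : ZMod N, Eop N ((x.val : ℤ)^2 - (y.val:ℤ)^2)
      = ∑ d : ZMod N, Eop N ((((y+d) : ZMod N).val : ℤ)^2 - (y.val:ℤ)^2) :=
    fun y => (Fintype.sum_equiv (Equiv.addLeft y) _ _ (fun d => rfl)).symm
  rw [Finset.sum_congr rfl (fun y _ => h2 y), Finset.sum_comm]
  -- now : ∑ d, ∑ y, Eop ((y+d).val² − y.val²)
  have h3 : ∀ d y : ZMod N, Eop N ((((y+d) : ZMod N).val : ℤ)^2 - (y.val:ℤ)^2)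
      = Eop N ((d.val : ℤ)^2) * Eop N (2 * (d.val : ℤ) * (y.val : ℤ)) := by
    intro d y
    rw [← Eop_add]
    apply Eop_period
    have hd : (N:ℤ) ∣ (((y+d) : ZMod N).val : ℤ) - ((y.val : ℤ) + (d.val : ℤ)) := by
      apply val_coe_dvd
      push_cast [ZMod.natCast_val, ZMod.cast_id]
      ring
    have := sq_dvd N hNeven _ _ hd
    obtain ⟨t, ht⟩ := this
    exact ⟨t, by linarith [ht]⟩
  have hgeom : ∀ d : ZMod N, d ≠ 0 → ∑ j ∈ Finset.range N, Eop N (2 * (d.val : ℤ) * j) = 0 := by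
    intro d hd
    set ζ := Complex.exp (2 * Real.pi * Complex.I * ((d.val : ℤ) : ℂ) / N) with hζdef
    have hζN : ζ ^ N = 1 := by
      rw [hζdef, ← Complex.exp_nat_mul]
      have harg : (N : ℂ) * (2 * Real.pi * Complex.I * ((d.val : ℤ) : ℂ) / N)
          = ((d.val : ℤ) : ℂ) * (2 * Real.pi * Complex.I) := by
        field_simp
      rw [harg, Complex.exp_int_mul_two_pi_mul_I]
    have hζ : ζ ≠ 1 := by
      intro h
      obtain ⟨n, hn⟩ := Complex.exp_eq_one_iff.mp (hζdef ▸ h)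
      have h2pi : (2 * (Real.pi : ℂ) * Complex.I) ≠ 0 := by
        simp [Real.pi_ne_zero, Complex.I_ne_zero, Complex.ofReal_ne_zero]
      have h' : (2 * (Real.pi : ℂ) * Complex.I) * (((d.val : ℤ) : ℂ) / N)
          = (2 * (Real.pi : ℂ) * Complex.I) * n := by
        linear_combination hn
      have h'' := mul_left_cancel₀ h2pi h'
      rw [div_eq_iff hN] at h''
      have hZ : ((d.val : ℤ)) = n * N := by exact_mod_cast h''
      have hdvd : (N : ℕ) ∣ d.val := by
        have : (N : ℤ) ∣ (d.val : ℤ) := ⟨n, by linarith⟩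
        exact_mod_cast this
      have hlt : d.val < N := ZMod.val_lt d
      have : d.val = 0 := Nat.eq_zero_of_dvd_of_lt hdvd hlt
      exact hd ((ZMod.val_eq_zero d).mp this)
    have hterm : ∀ j ∈ Finset.range N, Eop N (2 * (d.val : ℤ) * j) = ζ ^ j := by
      intro j _
      rw [hζdef, ← Complex.exp_nat_mul, Eop]
      congr 1; push_cast; ring
    rw [Finset.sum_congr rfl hterm, geom_sum_eq hζ, hζN, sub_self, zero_div]
  have hy : ∀ d : ZMod N, ∑ y : ZMod N, Eop N (2 * (d.val : ℤ) * (y.val : ℤ))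
      = ∑ j ∈ Finset.range N, Eop N (2 * (d.val : ℤ) * j) := by
    intro d
    rw [← sum_range_zmod N (fun y : ZMod N => Eop N (2 * (d.val : ℤ) * (y.val : ℤ)))]
    exact Finset.sum_congr rfl (fun j hj => by
      show Eop N (2 * (d.val : ℤ) * ((((j : ℕ) : ZMod N)).val : ℤ)) = Eop N (2 * (d.val : ℤ) * j)
      rw [ZMod.val_natCast_of_lt (Finset.mem_range.mp hj)])
  rw [Finset.sum_eq_single (0 : ZMod N)
    (fun d _ hd => by
      rw [Finset.sum_congr rfl (fun y _ => h3 d y), ← Finset.mul_sum, hy d, hgeom d hd, mul_zero])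
    (fun h => absurd (Finset.mem_univ (0 : ZMod N)) h)]
  simp [Eop_zero, Finset.card_univ, ZMod.card]

lemma Ftwist_eq (N : ℕ) [NeZero N] (hNeven : Even N) (f : ZMod N → ℂ) (m : ZMod N) :
    Ftwist N f m = (1 / Real.sqrt N : ℂ) * (Gsum N * Eop N (-((m.val : ℤ)) ^ 2)) * f m := by
  rw [Ftwist]
  have hterm : ∀ j ∈ Finset.range N,
      Complex.exp (Real.pi * Complex.I * (j : ℂ) ^ 2 / N) * W N 0 (j : ℤ) 0 f m
        = Eop N ((j : ℤ) ^ 2 - 2 * j * (m.val : ℤ)) * f m := by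
    intro j _
    rw [W]
    have h0 : (((0:ℤ) : ℂ) - ((0:ℤ) : ℂ) * ((j:ℤ) : ℂ)) = 0 := by push_cast; ring
    have hm : m - (((0:ℤ)) : ZMod N) = m := by push_cast; rw [sub_zero]
    rw [h0, hm]
    rw [show Real.pi * Complex.I * (0:ℂ) / N = 0 by ring, Complex.exp_zero, one_mul]
    rw [Eop, ← mul_assoc, ← Complex.exp_add]
    congr 2
    push_cast; ring
  rw [Finset.sum_congr rfl hterm, ← Finset.sum_mul, S_eq N hNeven ((m.val : ℤ))]
  ring

lemma hW (N : ℕ) [NeZero N] (p q : ℤ) (f : ZMod N → ℂ) (m : ZMod N) :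
    W N p q 0 f m = Eop N (-(p * q)) * Eop N (-2 * q * ((m.val : ℤ) - p)) * f (m - (p : ZMod N)) := by
  rw [W, Eop, Eop]
  congr 2
  · congr 1; push_cast; ring
  · congr 1; push_cast; ring

/-- `F` is unitary and satisfies the exact Egorov identity for the
positive twist `T = (1 1; 0 1)`: `F∘W(p,q,0) = W(p, p+q, 0)∘F`. -/
theorem twist_operator_unitary_egorov (N : ℕ) [NeZero N] (hNeven : Even N) :
    (∀ f g : ZMod N → ℂ,
      ∑ m : ZMod N, Ftwist N f m * starRingEnd ℂ (Ftwist N g m) =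
        ∑ m : ZMod N, f m * starRingEnd ℂ (g m)) ∧
    (∀ (p q : ℤ) (f : ZMod N → ℂ),
      Ftwist N (W N p q 0 f) = W N p (p + q) 0 (Ftwist N f)) := by
  have hN : (N : ℂ) ≠ 0 := Nat.cast_ne_zero.mpr (NeZero.ne N)
  have hc : (1 / Real.sqrt N : ℂ) * starRingEnd ℂ (1 / Real.sqrt N : ℂ) = 1 / N := by
    have hs : (Real.sqrt N : ℂ) * (Real.sqrt N : ℂ) = (N : ℂ) := by
      rw [← Complex.ofReal_mul, Real.mul_self_sqrt (Nat.cast_nonneg N)]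
      push_cast; ring
    rw [map_div₀, map_one, Complex.conj_ofReal]
    rw [div_mul_div_comm, one_mul, hs]
  have hE : ∀ v : ℤ, Eop N (-v ^ 2) * starRingEnd ℂ (Eop N (-v ^ 2)) = 1 := by
    intro v
    rw [Eop_conj, ← Eop_add, neg_neg, neg_add_cancel, Eop_zero]
  constructor
  · intro f g
    refine Finset.sum_congr rfl (fun m _ => ?_)
    rw [Ftwist_eq N hNeven f m, Ftwist_eq N hNeven g m]
    calc ((1 / Real.sqrt N : ℂ) * (Gsum N * Eop N (-((m.val : ℤ)) ^ 2)) * f m) *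
          starRingEnd ℂ ((1 / Real.sqrt N : ℂ) * (Gsum N * Eop N (-((m.val : ℤ)) ^ 2)) * g m)
        = ((1 / Real.sqrt N : ℂ) * starRingEnd ℂ (1 / Real.sqrt N : ℂ)) *
            (Gsum N * starRingEnd ℂ (Gsum N)) *
            (Eop N (-((m.val : ℤ)) ^ 2) * starRingEnd ℂ (Eop N (-((m.val : ℤ)) ^ 2))) *
            (f m * starRingEnd ℂ (g m)) := by
          simp only [map_mul]; ring
      _ = (1 / N) * (N : ℂ) * 1 * (f m * starRingEnd ℂ (g m)) := by
          rw [hc, gauss_norm N hNeven, hE]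
      _ = f m * starRingEnd ℂ (g m) := by field_simp
  · intro p q f
    funext m
    rw [Ftwist_eq N hNeven (W N p q 0 f) m, hW N p q f m, hW N p (p + q) (Ftwist N f) m,
      Ftwist_eq N hNeven f (m - (p : ZMod N))]
    set v : ℤ := (m.val : ℤ) with hv
    set w : ℤ := ((m - (p : ZMod N)).val : ℤ) with hwdef
    have key : Eop N (-v ^ 2) * Eop N (-(p * q)) * Eop N (-2 * q * (v - p))
        = Eop N (-(p * (p + q))) * Eop N (-2 * (p + q) * (v - p)) * Eop N (-w ^ 2) := by
      have hwp : Eop N (-w ^ 2) = Eop N (-(v - p) ^ 2) := by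
        apply Eop_period
        have hdvd : (N : ℤ) ∣ w - (v - p) := by
          apply val_coe_dvd
          rw [hv]
          push_cast
          simp [ZMod.natCast_val, ZMod.cast_id]
        have h2 := sq_dvd N hNeven w (v - p) hdvd
        have hring : (-w ^ 2) - (-(v - p) ^ 2) = -(w ^ 2 - (v - p) ^ 2) := by ring
        rw [hring]
        exact dvd_neg.mpr h2
      rw [hwp, ← Eop_add, ← Eop_add, ← Eop_add, ← Eop_add]
      congr 1; ring
    linear_combination ((1 / Real.sqrt N : ℂ) * Gsum N * f (m - (p : ZMod N))) * key
end

section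
/- Let r ≥ 2 be an integer and N = 2r. In the space of functions ℤ/2rℤ → ℂ, let δ_a denote the indicator function of a ∈ ℤ/2rℤ and set ζ_a = δ_a − δ_{−a}. For integers p, q let L_{p,q} = W(p,q,0) + W(−p,−q,0). Then the operators L_{p,q} preserve the subspace spanned by the ζ_a, and for every integer j: L_{p,q}·ζ_j = exp(−iπpq/(2r))·( exp(iπqj/r)·ζ_{j−p} + exp(−iπqj/r)·ζ_{j+p} ), where the indices of ζ are taken modulo 2r. (This is the Weyl quantization of the Wilson line 2cos 2π(px+qy) on the moduli space of flat SU(2)-connections on the torus, acting on the odd theta series.) -/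
open Complex

/-- The odd vector `ζ_a = δ_a − δ_{−a}` in `ZMod 2r → ℂ`. -/
def zeta (r : ℕ) (a : ZMod (2 * r)) : ZMod (2 * r) → ℂ :=
  fun m => (if m = a then 1 else 0) - (if m = -a then 1 else 0)

/-- The quantized Wilson line `L_{p,q} = W(p,q,0) + W(−p,−q,0)`. -/
noncomputable def Lop (r : ℕ) (p q : ℤ) (f : ZMod (2 * r) → ℂ) : ZMod (2 * r) → ℂ :=
  W (2 * r) p q 0 f + W (2 * r) (-p) (-q) 0 f

lemma exp_pi_div_int_eq (N : ℕ) (hN : N ≠ 0) {x y : ℤ} (h : ((2*N : ℤ)) ∣ (x - y)) :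
    Complex.exp (Real.pi * Complex.I * (x:ℂ) / N) =
    Complex.exp (Real.pi * Complex.I * (y:ℂ) / N) := by
  obtain ⟨t, ht⟩ := h
  have hN' : (N:ℂ) ≠ 0 := Nat.cast_ne_zero.mpr hN
  have hx : (x:ℂ) = (y:ℂ) + 2*N*t := by
    have := congrArg (fun z : ℤ => (z:ℂ)) ht
    push_cast at this
    linear_combination this
  rw [show Real.pi * Complex.I * (x:ℂ)/N = Real.pi*Complex.I*(y:ℂ)/N + t*(2*Real.pi*Complex.I) from by
    rw [hx]; field_simp]
  rw [Complex.exp_add, Complex.exp_int_mul_two_pi_mul_I, mul_one]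
lemma val_dvd {N : ℕ} [NeZero N] {a : ℤ} {m : ZMod N} (h : m = ((a:ℤ) : ZMod N)) :
    (N:ℤ) ∣ ((m.val : ℤ) - a) := by
  have h2 : (((m.val:ℤ)) : ZMod N) = ((a:ℤ) : ZMod N) := by
    rw [Int.cast_natCast, ZMod.natCast_val, ZMod.cast_id, h]
  exact Int.ModEq.dvd ((ZMod.intCast_eq_intCast_iff _ _ _).mp h2).symm
lemma formula (r : ℕ) (hr : 2 ≤ r) (p q : ℤ) (j : ℤ) :
      Lop r p q (zeta r ((j : ℤ) : ZMod (2 * r))) =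
        Complex.exp (-(Real.pi) * Complex.I * p * q / (2 * r)) •
          (Complex.exp (Real.pi * Complex.I * q * j / r) •
              zeta r (((j - p : ℤ)) : ZMod (2 * r)) +
            Complex.exp (-(Real.pi) * Complex.I * q * j / r) •
              zeta r (((j + p : ℤ)) : ZMod (2 * r))) := by
  haveI : NeZero (2*r) := ⟨by omega⟩
  have hr0 : (r:ℂ) ≠ 0 := Nat.cast_ne_zero.mpr (by omega)
  funext m
  simp only [Lop, W, zeta, Pi.add_apply, Pi.smul_apply, smul_eq_mul, Int.cast_zero, zero_sub,
    Int.cast_neg, neg_neg, neg_mul, sub_neg_eq_add]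
  -- rewrite conditions
  have i1 : (m - (↑p : ZMod (2*r)) = ((j:ℤ) : ZMod (2*r))) ↔ (m = (((j+p:ℤ)) : ZMod (2*r))) := by
    rw [sub_eq_iff_eq_add, show ((j:ℤ) + (p:ℤ) : ZMod (2*r)) = (((j+p:ℤ)) : ZMod (2*r)) from by
      push_cast; ring]
  have i2 : (m - (↑p : ZMod (2*r)) = -((j:ℤ) : ZMod (2*r))) ↔ (m = -(((j-p:ℤ)) : ZMod (2*r))) := by
    rw [sub_eq_iff_eq_add, show (-((j:ℤ):ZMod (2*r)) + (p:ℤ) : ZMod (2*r)) = -(((j-p:ℤ)) : ZMod (2*r)) from by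
      push_cast; ring]
  have i3 : (m + (↑p : ZMod (2*r)) = ((j:ℤ) : ZMod (2*r))) ↔ (m = (((j-p:ℤ)) : ZMod (2*r))) := by
    rw [← sub_neg_eq_add, sub_eq_iff_eq_add, show (((j:ℤ):ZMod (2*r)) + -(p:ℤ) : ZMod (2*r)) = (((j-p:ℤ)) : ZMod (2*r)) from by
      push_cast; ring]
  have i4 : (m + (↑p : ZMod (2*r)) = -((j:ℤ) : ZMod (2*r))) ↔ (m = -(((j+p:ℤ)) : ZMod (2*r))) := by
    rw [← sub_neg_eq_add, sub_eq_iff_eq_add, show (-((j:ℤ):ZMod (2*r)) + -(p:ℤ) : ZMod (2*r)) = -(((j+p:ℤ)) : ZMod (2*r)) from by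
      push_cast; ring]
  simp only [i1, i2, i3, i4]
  -- normalize prefactors
  rw [show (Real.pi * Complex.I * -((p:ℂ) * q) / ((2*r : ℕ):ℂ)) = (-(Real.pi * Complex.I * p * q) / (2 * (r:ℂ))) from by
    push_cast; ring]
  rw [show (Real.pi * Complex.I * (0 + (p:ℂ) * -(q:ℂ)) / ((2*r : ℕ):ℂ)) = (-(Real.pi * Complex.I * p * q) / (2 * (r:ℂ))) from by
    push_cast; ring]
  -- coefficient identities
  
  have key : ∀ (x y : ℤ), (2*(2*r) : ℤ) ∣ (x - y) →
      Complex.exp (Real.pi * Complex.I * (x:ℂ) / ((2*r:ℕ):ℂ)) =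
      Complex.exp (Real.pi * Complex.I * (y:ℂ) / ((2*r:ℕ):ℂ)) :=
    fun x y h => exp_pi_div_int_eq (2*r) (by omega) (by exact_mod_cast h)
  have h1 : Complex.exp (-(2 * Real.pi * Complex.I * q * (((m.val:ℕ):ℂ) - p)) / ((2*r:ℕ):ℂ)) *
      (if m = (((j+p:ℤ)) : ZMod (2*r)) then (1:ℂ) else 0) =
      Complex.exp (-(Real.pi * Complex.I * q * j) / (r:ℂ)) *
      (if m = (((j+p:ℤ)) : ZMod (2*r)) then (1:ℂ) else 0) := by
    split_ifs with hQ
    · simp only [mul_one]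
      obtain ⟨t, ht⟩ := val_dvd hQ
      rw [show (-(2 * Real.pi * Complex.I * q * (((m.val:ℕ):ℂ) - p)) / ((2*r:ℕ):ℂ)) =
          Real.pi * Complex.I * (((-2*q*((m.val:ℤ)-p) : ℤ)):ℂ) / ((2*r:ℕ):ℂ) from by push_cast; ring]
      rw [show (-(Real.pi * Complex.I * q * j) / (r:ℂ)) =
          Real.pi * Complex.I * (((-2*q*j : ℤ)):ℂ) / ((2*r:ℕ):ℂ) from by push_cast; field_simp]
      exact key _ _ ⟨-q*t, by push_cast at ht ⊢; linear_combination (-2*q) * ht⟩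
    · ring
  have h2 : Complex.exp (-(2 * Real.pi * Complex.I * q * (((m.val:ℕ):ℂ) - p)) / ((2*r:ℕ):ℂ)) *
      (if m = -(((j-p:ℤ)) : ZMod (2*r)) then (1:ℂ) else 0) =
      Complex.exp (Real.pi * Complex.I * q * j / (r:ℂ)) *
      (if m = -(((j-p:ℤ)) : ZMod (2*r)) then (1:ℂ) else 0) := by
    split_ifs with hQ
    · simp only [mul_one]
      have hQ' : m = (((-(j-p):ℤ)) : ZMod (2*r)) := by rw [hQ]; push_cast; ring
      obtain ⟨t, ht⟩ := val_dvd hQ'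
      rw [show (-(2 * Real.pi * Complex.I * q * (((m.val:ℕ):ℂ) - p)) / ((2*r:ℕ):ℂ)) =
          Real.pi * Complex.I * (((-2*q*((m.val:ℤ)-p) : ℤ)):ℂ) / ((2*r:ℕ):ℂ) from by push_cast; ring]
      rw [show (Real.pi * Complex.I * q * j / (r:ℂ)) =
          Real.pi * Complex.I * (((2*q*j : ℤ)):ℂ) / ((2*r:ℕ):ℂ) from by push_cast; field_simp]
      exact key _ _ ⟨-q*t, by push_cast at ht ⊢; linear_combination (-2*q) * ht⟩
    · ring
  have h3 : Complex.exp (-(2 * Real.pi * Complex.I * -(q:ℂ) * (((m.val:ℕ):ℂ) + p)) / ((2*r:ℕ):ℂ)) *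
      (if m = (((j-p:ℤ)) : ZMod (2*r)) then (1:ℂ) else 0) =
      Complex.exp (Real.pi * Complex.I * q * j / (r:ℂ)) *
      (if m = (((j-p:ℤ)) : ZMod (2*r)) then (1:ℂ) else 0) := by
    split_ifs with hQ
    · simp only [mul_one]
      obtain ⟨t, ht⟩ := val_dvd hQ
      rw [show (-(2 * Real.pi * Complex.I * -(q:ℂ) * (((m.val:ℕ):ℂ) + p)) / ((2*r:ℕ):ℂ)) =
          Real.pi * Complex.I * (((2*q*((m.val:ℤ)+p) : ℤ)):ℂ) / ((2*r:ℕ):ℂ) from by push_cast; ring]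
      rw [show (Real.pi * Complex.I * q * j / (r:ℂ)) =
          Real.pi * Complex.I * (((2*q*j : ℤ)):ℂ) / ((2*r:ℕ):ℂ) from by push_cast; field_simp]
      exact key _ _ ⟨q*t, by push_cast at ht ⊢; linear_combination (2*q) * ht⟩
    · ring
  have h4 : Complex.exp (-(2 * Real.pi * Complex.I * -(q:ℂ) * (((m.val:ℕ):ℂ) + p)) / ((2*r:ℕ):ℂ)) *
      (if m = -(((j+p:ℤ)) : ZMod (2*r)) then (1:ℂ) else 0) =
      Complex.exp (-(Real.pi * Complex.I * q * j) / (r:ℂ)) *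
      (if m = -(((j+p:ℤ)) : ZMod (2*r)) then (1:ℂ) else 0) := by
    split_ifs with hQ
    · simp only [mul_one]
      have hQ' : m = (((-(j+p):ℤ)) : ZMod (2*r)) := by rw [hQ]; push_cast; ring
      obtain ⟨t, ht⟩ := val_dvd hQ'
      rw [show (-(2 * Real.pi * Complex.I * -(q:ℂ) * (((m.val:ℕ):ℂ) + p)) / ((2*r:ℕ):ℂ)) =
          Real.pi * Complex.I * (((2*q*((m.val:ℤ)+p) : ℤ)):ℂ) / ((2*r:ℕ):ℂ) from by push_cast; ring]
      rw [show (-(Real.pi * Complex.I * q * j) / (r:ℂ)) =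
          Real.pi * Complex.I * (((-2*q*j : ℤ)):ℂ) / ((2*r:ℕ):ℂ) from by push_cast; field_simp]
      exact key _ _ ⟨q*t, by push_cast at ht ⊢; linear_combination (2*q) * ht⟩
    · ring
  linear_combination Complex.exp (-(Real.pi * Complex.I * p * q) / (2 * (r:ℂ))) * (h1 - h2 + h3 - h4)

/-- the operators `L_{p,q}` preserve the span of the `ζ_a`, and
`L_{p,q}·ζ_j = exp(−iπpq/(2r))·(exp(iπqj/r)·ζ_{j−p} + exp(−iπqj/r)·ζ_{j+p})`. -/
theorem wilson_line_on_odd_theta (r : ℕ) (hr : 2 ≤ r) (p q : ℤ) :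
    (∀ f ∈ Submodule.span ℂ (Set.range (zeta r)),
      Lop r p q f ∈ Submodule.span ℂ (Set.range (zeta r))) ∧
    (∀ j : ℤ,
      Lop r p q (zeta r ((j : ℤ) : ZMod (2 * r))) =
        Complex.exp (-(Real.pi) * Complex.I * p * q / (2 * r)) •
          (Complex.exp (Real.pi * Complex.I * q * j / r) •
              zeta r (((j - p : ℤ)) : ZMod (2 * r)) +
            Complex.exp (-(Real.pi) * Complex.I * q * j / r) •
              zeta r (((j + p : ℤ)) : ZMod (2 * r)))) := by
  haveI : NeZero (2*r) := ⟨by omega⟩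
  constructor
  · have hzero : Lop r p q 0 = 0 := by
      funext m; simp [Lop, W]
    have hadd : ∀ f g, Lop r p q (f + g) = Lop r p q f + Lop r p q g := by
      intro f g; funext m; simp [Lop, W, Pi.add_apply]; ring
    have hsmul : ∀ (c : ℂ) f, Lop r p q (c • f) = c • Lop r p q f := by
      intro c f; funext m; simp [Lop, W, Pi.add_apply, Pi.smul_apply, smul_eq_mul]; ring
    intro f hf
    induction hf using Submodule.span_induction with
    | mem x hx =>
      obtain ⟨a, rfl⟩ := hx
      have ha : a = (((a.val : ℤ)) : ZMod (2*r)) := by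
        rw [Int.cast_natCast, ZMod.natCast_val, ZMod.cast_id]
      rw [ha, formula r hr p q (a.val : ℤ)]
      refine Submodule.smul_mem _ _ (Submodule.add_mem _ ?_ ?_) <;>
        exact Submodule.smul_mem _ _ (Submodule.subset_span ⟨_, rfl⟩)
    | zero => rw [hzero]; exact Submodule.zero_mem _
    | add x y hx hy ihx ihy => rw [hadd]; exact Submodule.add_mem _ ihx ihy
    | smul c x hx ih => rw [hsmul]; exact Submodule.smul_mem _ _ ih
  · exact formula r hr p q
end

section
/- Let r ≥ 2 be an integer and N = 2r. Let V_odd be the subspace of the space of functions ℤ/2rℤ → ℂ consisting of the odd functions, i.e. those f with f(−m) = −f(m) for all m ∈ ℤ/2rℤ (a space of dimension r−1). For integers p, q, the operator L_{p,q} = W(p,q,0) + W(−p,−q,0) maps V_odd into itself, and the linear span of the restrictions of the operators L_{p,q}, over all p, q ∈ ℤ, is the space of ALL linear endomorphisms of V_odd; that is, the quantized Wilson lines span the algebra of all linear operators on the Hilbert space of the quantization of the moduli space of flat SU(2)-connections on the torus. -/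
open Complex



/-- `W(p,q,k)` as a linear operator on `ZMod N → ℂ`. -/
noncomputable def Wl (N : ℕ) (p q k : ℤ) : (ZMod N → ℂ) →ₗ[ℂ] (ZMod N → ℂ) where
  toFun := W N p q k
  map_add' f g := by funext m; simp [W]; ring
  map_smul' c f := by funext m; simp [W]; ring

/-- The subspace of odd functions in `ZMod 2r → ℂ`. -/
noncomputable def Vodd (r : ℕ) : Submodule ℂ (ZMod (2 * r) → ℂ) where
  carrier := {f | ∀ m, f (-m) = -f m}
  add_mem' := by
    intro f g hf hg m
    simp only [Pi.add_apply, hf m, hg m]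
    ring
  zero_mem' := by intro m; simp
  smul_mem' := by
    intro c f hf m
    simp only [Pi.smul_apply, hf m, smul_eq_mul]
    ring


/-- `ee N t = exp(π i t / N)`. -/
noncomputable def ee (N : ℕ) (t : ℤ) : ℂ := Complex.exp (Real.pi * Complex.I * (t : ℂ) / N)

lemma ee_add (N : ℕ) (a b : ℤ) : ee N (a + b) = ee N a * ee N b := by
  rw [ee, ee, ee, ← Complex.exp_add]
  congr 1
  push_cast
  ring

lemma ee_zero (N : ℕ) : ee N 0 = 1 := by simp [ee]

lemma ee_of_dvd (N : ℕ) (hN : N ≠ 0) {t : ℤ} (h : (2 * (N:ℤ)) ∣ t) : ee N t = 1 := by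
  obtain ⟨c, rfl⟩ := h
  rw [ee]
  have : (Real.pi : ℂ) * Complex.I * ((2 * (N:ℤ) * c : ℤ) : ℂ) / N = (c : ℤ) * (2 * Real.pi * Complex.I) := by
    have hN' : (N : ℂ) ≠ 0 := by exact_mod_cast hN
    field_simp
    push_cast
    ring
  rw [this, Complex.exp_int_mul_two_pi_mul_I]

lemma ee_pow (N : ℕ) (t : ℤ) (q : ℕ) : ee N ((q : ℤ) * t) = (ee N t) ^ q := by
  rw [ee, ee, ← Complex.exp_nat_mul]
  congr 1
  push_cast
  ring

lemma ee_ne_one (N : ℕ) (hN : N ≠ 0) {t : ℤ} (h : ¬ (2 * (N:ℤ)) ∣ t) : ee N t ≠ 1 := by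
  intro h1
  obtain ⟨n, hn⟩ := Complex.exp_eq_one_iff.mp h1
  apply h
  refine ⟨n, ?_⟩
  have hN' : (N : ℂ) ≠ 0 := by exact_mod_cast hN
  have hπ : (Real.pi : ℂ) ≠ 0 := by exact_mod_cast Real.pi_ne_zero
  have hI := Complex.I_ne_zero
  have : (t : ℂ) = 2 * (N:ℂ) * n := by
    field_simp at hn
    have h2 : (Real.pi : ℂ) * Complex.I * (t:ℂ) = Real.pi * Complex.I * (2 * (N:ℂ) * n) := by
      linear_combination (Real.pi * Complex.I) * hn
    exact mul_left_cancel₀ (mul_ne_zero hπ hI) h2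
  exact_mod_cast this

/-- Geometric sum of `ee`. -/
lemma ee_geom_sum (N : ℕ) (hN : N ≠ 0) (t : ℤ) :
    ∑ q ∈ Finset.range (2 * N), ee N ((q : ℤ) * t)
      = if (2 * (N:ℤ)) ∣ t then ((2 * N : ℕ) : ℂ) else 0 := by
  by_cases h : (2 * (N:ℤ)) ∣ t
  · simp only [if_pos h]
    have : ∀ q ∈ Finset.range (2 * N), ee N ((q : ℤ) * t) = 1 := by
      intro q _
      exact ee_of_dvd N hN (Dvd.dvd.mul_left h _)
    rw [Finset.sum_congr rfl this]
    simp
  · simp only [if_neg h]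
    have hz := ee_ne_one N hN h
    calc ∑ q ∈ Finset.range (2 * N), ee N ((q : ℤ) * t)
        = ∑ q ∈ Finset.range (2 * N), (ee N t) ^ q := by
          exact Finset.sum_congr rfl (fun q _ => ee_pow N t q)
      _ = ((ee N t) ^ (2 * N) - 1) / (ee N t - 1) := geom_sum_eq hz _
      _ = 0 := by
          rw [← ee_pow, ee_of_dvd N hN ⟨t, by push_cast; ring⟩]
          simp

section
variable {r : ℕ}

lemma dvd_sub_iff_cast [NeZero (2 * r)] (m : ZMod (2 * r)) (a : ℕ) :
    ((2 * r : ℕ) : ℤ) ∣ ((a : ℤ) - (m.val : ℤ)) ↔ m = (a : ZMod (2 * r)) := by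
  rw [← ZMod.intCast_zmod_eq_zero_iff_dvd]
  push_cast
  rw [ZMod.natCast_val, ZMod.cast_id, sub_eq_zero, eq_comm]

lemma dvd_add_iff_cast [NeZero (2 * r)] (m : ZMod (2 * r)) (a : ℕ) :
    ((2 * r : ℕ) : ℤ) ∣ ((a : ℤ) + (m.val : ℤ)) ↔ m = -(a : ZMod (2 * r)) := by
  rw [← ZMod.intCast_zmod_eq_zero_iff_dvd]
  push_cast
  rw [ZMod.natCast_val, ZMod.cast_id, add_comm, add_eq_zero_iff_eq_neg]

end

lemma ee_congr_dvd (N : ℕ) (hN : N ≠ 0) {a b : ℤ} (h : (2 * (N:ℤ)) ∣ a - b) :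
    ee N a = ee N b := by
  rw [show a = b + (a - b) by ring, ee_add, ee_of_dvd N hN h, mul_one]

/-- Delta-type odd functions. -/
noncomputable def Efun (N : ℕ) (a : ZMod N) : ZMod N → ℂ :=
  fun m => (if m = a then 1 else 0) - (if m = -a then 1 else 0)

lemma Efun_mem (r : ℕ) (a : ZMod (2 * r)) : Efun (2 * r) a ∈ Vodd r := by
  intro m
  simp only [Efun, neg_eq_iff_eq_neg, neg_inj, neg_neg]
  ring

/-- Rewriting `W` in terms of `ee`. -/
lemma W_apply_ee (N : ℕ) (p q : ℤ) (f : ZMod N → ℂ) (m : ZMod N) :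
    W N p q 0 f m = ee N (-(p * q)) * ee N (-2 * q * ((m.val : ℤ) - p)) * f (m - (p : ZMod N)) := by
  unfold W ee
  congr 2
  · congr 1
    push_cast
    ring
  · congr 1
    push_cast
    ring

lemma Wl_apply' (N : ℕ) (p q k : ℤ) (f : ZMod N → ℂ) : Wl N p q k f = W N p q k f := rfl

lemma neg_val_add (r : ℕ) [NeZero (2 * r)] (m : ZMod (2 * r)) :
    (((-m).val : ℤ)) + (m.val : ℤ) = if m = 0 then 0 else (2 * r : ℤ) := by
  rw [ZMod.neg_val]
  by_cases hm : m = 0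
  · simp [hm]
  · rw [if_neg hm, if_neg hm]
    have hle : m.val ≤ 2 * r := le_of_lt (ZMod.val_lt m)
    push_cast [Nat.cast_sub hle]
    ring

/-- Invariance of the odd subspace. -/
lemma L_mem (r : ℕ) (hr : r ≠ 0) (p q : ℤ) :
    ∀ f ∈ Vodd r, (Wl (2 * r) p q 0 + Wl (2 * r) (-p) (-q) 0) f ∈ Vodd r := by
  haveI : NeZero (2 * r) := ⟨by omega⟩
  intro f hf m
  have key : ∀ p' q' : ℤ,
      ee (2 * r) (-2 * q' * (((-m).val : ℤ) - p')) = ee (2 * r) (2 * q' * ((m.val : ℤ) + p')) := by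
    intro p' q'
    apply ee_congr_dvd _ (by omega)
    have h := neg_val_add r m
    by_cases hm : m = 0
    · rw [if_pos hm] at h
      refine ⟨0, ?_⟩
      have : ((-m).val : ℤ) = -(m.val : ℤ) := by linarith
      rw [this]; ring
    · rw [if_neg hm] at h
      refine ⟨-q', ?_⟩
      have : ((-m).val : ℤ) = 2 * r - (m.val : ℤ) := by linarith
      rw [this]; push_cast; ring
  simp only [LinearMap.add_apply, Pi.add_apply, Wl_apply']
  rw [W_apply_ee, W_apply_ee, W_apply_ee, W_apply_ee]
  rw [key p q]
  rw [show (-2 * -q * (((-m).val : ℤ) - -p)) = (-2 * (-q) * (((-m).val : ℤ) - (-p))) by ring,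
    key (-p) (-q)]
  rw [show (2 * -q * ((m.val : ℤ) + -p)) = (-2 * q * ((m.val : ℤ) - p)) by ring]
  rw [show (-2 * -q * ((m.val : ℤ) - -p)) = (2 * q * ((m.val : ℤ) + p)) by ring]
  rw [show (-(-p * -q)) = -(p * q) by ring]
  have e1 : -m - ((p : ℤ) : ZMod (2 * r)) = -(m + ((p : ℤ) : ZMod (2 * r))) := by ring
  have e2 : -m - ((-p : ℤ) : ZMod (2 * r)) = -(m - ((p : ℤ) : ZMod (2 * r))) := by
    push_cast; ring
  have e3 : m - ((-p : ℤ) : ZMod (2 * r)) = m + ((p : ℤ) : ZMod (2 * r)) := by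
    push_cast; ring
  rw [e1, e2, e3, hf (m + ((p : ℤ) : ZMod (2 * r))), hf (m - ((p : ℤ) : ZMod (2 * r)))]
  ring

section ZModHelpers
variable {r : ℕ} (hr : 2 ≤ r)

lemma natCast_inj' {a b : ℕ} (ha : a < 2 * r) (hb : b < 2 * r) :
    ((a : ZMod (2 * r)) = (b : ZMod (2 * r))) ↔ a = b := by
  constructor
  · intro h
    have := congrArg ZMod.val h
    rwa [ZMod.val_cast_of_lt ha, ZMod.val_cast_of_lt hb] at this
  · rintro rfl; rfl

lemma natCast_ne_neg {a b : ℕ} (h0 : 0 < a + b) (h1 : a + b < 2 * r) :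
    (a : ZMod (2 * r)) ≠ -(b : ZMod (2 * r)) := by
  intro h
  have h2 : ((a + b : ℕ) : ZMod (2 * r)) = 0 := by push_cast; rw [h]; ring
  rw [ZMod.natCast_eq_zero_iff] at h2
  have := Nat.le_of_dvd h0 h2
  omega

lemma natCast_eq_neg' {a b : ℕ} (h : a + b = 2 * r) :
    (a : ZMod (2 * r)) = -(b : ZMod (2 * r)) := by
  have h2 : ((a + b : ℕ) : ZMod (2 * r)) = 0 := by rw [h]; simp
  push_cast at h2
  linear_combination h2
end ZModHelpers

lemma natCast_eq_neg_iff_dvd {r : ℕ} (a b : ℕ) :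
    ((a : ZMod (2 * r)) = -(b : ZMod (2 * r))) ↔ (2 * r) ∣ (a + b) := by
  rw [eq_neg_iff_add_eq_zero, ← Nat.cast_add, ZMod.natCast_eq_zero_iff]

lemma dvd_char (r : ℕ) {s : ℕ} (h1 : 0 < s) (h2 : s < 4 * r) (hd : 2 * r ∣ s) : s = 2 * r := by
  obtain ⟨c, rfl⟩ := hd
  have hc1 : 1 ≤ c := by
    rcases Nat.eq_zero_or_pos c with h | h
    · subst h; omega
    · exact h
  have hc2 : c < 2 := by
    by_contra h
    push_neg at h
    have : 2 * r * 2 ≤ 2 * r * c := Nat.mul_le_mul_left _ h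
    omega
  have : c = 1 := by omega
  subst this
  ring

/-- The basis vectors of `Vodd r`. -/
noncomputable def oddVec (r : ℕ) (j : Fin (r - 1)) : Vodd r :=
  ⟨Efun (2 * r) ((j.val + 1 : ℕ) : ZMod (2 * r)), Efun_mem r _⟩

lemma oddVec_indep (r : ℕ) (hr : 2 ≤ r) : LinearIndependent ℂ (oddVec r) := by
  rw [Fintype.linearIndependent_iff]
  intro g hg i
  have h := congrFun (congrArg Subtype.val hg) ((i.val + 1 : ℕ) : ZMod (2 * r))
  rw [Submodule.coe_sum] at h
  simp only [Submodule.coe_smul, Finset.sum_apply, Pi.smul_apply, oddVec, Efun,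
    smul_eq_mul] at h
  have hval : ∀ b : Fin (r - 1),
      (g b * ((if ((i.val + 1 : ℕ) : ZMod (2 * r)) = ((b.val + 1 : ℕ) : ZMod (2 * r)) then (1:ℂ) else 0)
        - (if ((i.val + 1 : ℕ) : ZMod (2 * r)) = -((b.val + 1 : ℕ) : ZMod (2 * r)) then 1 else 0)))
      = if b = i then g b else 0 := by
    intro b
    have hb1 : b.val + 1 < 2 * r := by omega
    have hi1 : i.val + 1 < 2 * r := by omega
    have hB : ¬ (((i.val + 1 : ℕ) : ZMod (2 * r)) = -((b.val + 1 : ℕ) : ZMod (2 * r))) := by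
      rw [natCast_eq_neg_iff_dvd]
      intro hd
      have := Nat.le_of_dvd (by omega) hd
      omega
    rw [if_neg hB]
    by_cases hbi : b = i
    · subst hbi
      rw [if_pos rfl, if_pos rfl]
      ring
    · have hA : ¬ (((i.val + 1 : ℕ) : ZMod (2 * r)) = ((b.val + 1 : ℕ) : ZMod (2 * r))) := by
        rw [natCast_inj' hi1 hb1]
        intro h
        exact hbi (by ext; omega)
      rw [if_neg hA, if_neg hbi]
      ring
  rw [Finset.sum_congr rfl (fun b _ => hval b), Finset.sum_ite_eq' Finset.univ i g] at h
  simpa using h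

lemma oddVec_span (r : ℕ) (hr : 2 ≤ r) : ⊤ ≤ Submodule.span ℂ (Set.range (oddVec r)) := by
  haveI : NeZero (2 * r) := ⟨by omega⟩
  rintro ⟨f, hf⟩ -
  have key : (⟨f, hf⟩ : Vodd r)
      = ∑ i : Fin (r - 1), f ((i.val + 1 : ℕ) : ZMod (2 * r)) • oddVec r i := by
    apply Subtype.ext
    rw [Submodule.coe_sum]
    funext m
    simp only [Submodule.coe_smul, Finset.sum_apply, Pi.smul_apply, oddVec, Efun, smul_eq_mul]
    have ha : m.val < 2 * r := ZMod.val_lt m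
    have hm : ((m.val : ℕ) : ZMod (2 * r)) = m := by
      rw [ZMod.natCast_val, ZMod.cast_id]
    rw [← hm]
    set a := m.val with hav
    have hcase : a = 0 ∨ (1 ≤ a ∧ a ≤ r - 1) ∨ a = r ∨ (r + 1 ≤ a ∧ a ≤ 2 * r - 1) := by omega
    -- helper to evaluate the two indicator conditions
    have cond1 : ∀ b : Fin (r - 1),
        (((a : ℕ) : ZMod (2 * r)) = ((b.val + 1 : ℕ) : ZMod (2 * r))) ↔ a = b.val + 1 :=
      fun b => natCast_inj' ha (by omega)
    have cond2 : ∀ b : Fin (r - 1),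
        (((a : ℕ) : ZMod (2 * r)) = -((b.val + 1 : ℕ) : ZMod (2 * r))) ↔ 2 * r ∣ a + (b.val + 1) :=
      fun b => natCast_eq_neg_iff_dvd _ _
    rcases hcase with h0 | ⟨h1, h2⟩ | h0 | ⟨h1, h2⟩
    · -- a = 0 : f 0 = 0 and all terms vanish
      have hz : f ((a : ℕ) : ZMod (2 * r)) = 0 := by
        have h := hf 0
        rw [neg_zero] at h
        rw [h0]
        push_cast
        linear_combination h / 2
      rw [hz, Finset.sum_eq_zero]
      intro b _
      have hA : ¬ (((a : ℕ) : ZMod (2 * r)) = ((b.val + 1 : ℕ) : ZMod (2 * r))) := fun h => by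
        have := (cond1 b).mp h; omega
      have hB : ¬ (((a : ℕ) : ZMod (2 * r)) = -((b.val + 1 : ℕ) : ZMod (2 * r))) := fun h => by
        have hd := (cond2 b).mp h
        have := Nat.le_of_dvd (by omega) hd
        omega
      rw [if_neg hA, if_neg hB]
      ring
    · -- 1 ≤ a ≤ r - 1
      rw [Finset.sum_eq_single ⟨a - 1, by omega⟩]
      · have e1 : (⟨a - 1, by omega⟩ : Fin (r - 1)).val + 1 = a := by simp; omega
        have hB : ¬ (((a : ℕ) : ZMod (2 * r)) = -(((⟨a - 1, by omega⟩ : Fin (r - 1)).val + 1 : ℕ) : ZMod (2 * r))) := fun h => by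
          have hd := (cond2 _).mp h
          rw [e1] at hd
          have := Nat.le_of_dvd (by omega) hd
          omega
        rw [e1] at hB ⊢
        rw [if_pos rfl, if_neg hB]
        ring
      · intro b _ hb
        have hA : ¬ (((a : ℕ) : ZMod (2 * r)) = ((b.val + 1 : ℕ) : ZMod (2 * r))) := fun h => by
          have := (cond1 b).mp h
          exact hb (by ext; simp; omega)
        have hB : ¬ (((a : ℕ) : ZMod (2 * r)) = -((b.val + 1 : ℕ) : ZMod (2 * r))) := fun h => by
          have hd := (cond2 b).mp h
          have := Nat.le_of_dvd (by omega) hd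
          omega
        rw [if_neg hA, if_neg hB]
        ring
      · intro h; exact absurd (Finset.mem_univ _) h
    · -- a = r : f m = 0 and all terms vanish
      have hmm : -(((a:ℕ)) : ZMod (2*r)) = ((a:ℕ) : ZMod (2 * r)) := by
        rw [h0]
        exact (natCast_eq_neg' (by omega)).symm
      have hz : f ((a : ℕ) : ZMod (2 * r)) = 0 := by
        have h := hf ((a : ℕ) : ZMod (2 * r))
        rw [hmm] at h
        linear_combination h / 2
      rw [hz, Finset.sum_eq_zero]
      intro b _
      have hA : ¬ (((a : ℕ) : ZMod (2 * r)) = ((b.val + 1 : ℕ) : ZMod (2 * r))) := fun h => by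
        have := (cond1 b).mp h; omega
      have hB : ¬ (((a : ℕ) : ZMod (2 * r)) = -((b.val + 1 : ℕ) : ZMod (2 * r))) := fun h => by
        have hd := (cond2 b).mp h
        have := Nat.le_of_dvd (by omega) hd
        omega
      rw [if_neg hA, if_neg hB]
      ring
    · -- r+1 ≤ a ≤ 2r-1
      rw [Finset.sum_eq_single ⟨2 * r - 1 - a, by omega⟩]
      · have e1 : (⟨2 * r - 1 - a, by omega⟩ : Fin (r - 1)).val + 1 = 2 * r - a := by simp; omega
        have hA : ¬ (((a : ℕ) : ZMod (2 * r)) = (((⟨2 * r - 1 - a, by omega⟩ : Fin (r - 1)).val + 1 : ℕ) : ZMod (2 * r))) := fun h => by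
          have := (cond1 _).mp h
          omega
        have hB : (((a : ℕ) : ZMod (2 * r)) = -(((⟨2 * r - 1 - a, by omega⟩ : Fin (r - 1)).val + 1 : ℕ) : ZMod (2 * r))) := by
          rw [cond2]
          exact ⟨1, by simp; omega⟩
        rw [e1] at hA hB ⊢
        rw [if_neg hA, if_pos hB]
        have hneg : ((2 * r - a : ℕ) : ZMod (2 * r)) = -((a : ℕ) : ZMod (2 * r)) := 
          natCast_eq_neg' (by omega)
        rw [hneg]
        have h := hf ((a : ℕ) : ZMod (2 * r))
        rw [h]
        ring
      · intro b _ hb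
        have hA : ¬ (((a : ℕ) : ZMod (2 * r)) = ((b.val + 1 : ℕ) : ZMod (2 * r))) := fun h => by
          have := (cond1 b).mp h; omega
        have hB : ¬ (((a : ℕ) : ZMod (2 * r)) = -((b.val + 1 : ℕ) : ZMod (2 * r))) := fun h => by
          have hd := (cond2 b).mp h
          have := dvd_char r (by omega) (by omega) hd
          exact hb (by ext; simp; omega)
        rw [if_neg hA, if_neg hB]
        ring
      · intro h; exact absurd (Finset.mem_univ _) h
  rw [key]
  exact Submodule.sum_mem _ fun i _ =>
    Submodule.smul_mem _ _ (Submodule.subset_span ⟨i, rfl⟩)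

noncomputable def oddBasis (r : ℕ) (hr : 2 ≤ r) : Module.Basis (Fin (r - 1)) ℂ (Vodd r) :=
  Module.Basis.mk (oddVec_indep r hr) (oddVec_span r hr)

lemma Efun_eval_pos {r : ℕ} (hr : 2 ≤ r) {a b : ℕ} (ha1 : 1 ≤ a) (ha2 : a ≤ r - 1)
    (hb1 : 1 ≤ b) (hb2 : b ≤ r - 1) :
    Efun (2 * r) ((b : ℕ) : ZMod (2 * r)) ((a : ℕ) : ZMod (2 * r)) = if a = b then 1 else 0 := by
  unfold Efun
  by_cases h : a = b
  · subst h
    rw [if_pos rfl, if_neg (natCast_ne_neg (by omega) (by omega)), if_pos rfl]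
    ring
  · rw [if_neg (fun hh => h (natCast_inj' (by omega) (by omega) |>.mp hh)),
      if_neg (natCast_ne_neg (by omega) (by omega)), if_neg h]
    ring

lemma Efun_eval_neg {r : ℕ} (hr : 2 ≤ r) {a b : ℕ} (ha1 : 1 ≤ a) (ha2 : a ≤ r - 1)
    (hb1 : 1 ≤ b) (hb2 : b ≤ r - 1) :
    Efun (2 * r) ((b : ℕ) : ZMod (2 * r)) (-((a : ℕ) : ZMod (2 * r)))
      = if a = b then (-1 : ℂ) else 0 := by
  unfold Efun
  by_cases h : a = b
  · subst h
    rw [if_pos rfl,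
      if_neg (fun hh => (natCast_ne_neg (r := r) (by omega) (by omega)) hh.symm)]
    simp
  · rw [if_neg (fun hh => (natCast_ne_neg (r := r) (by omega) (by omega)) hh.symm),
      if_neg (fun hh => h ((natCast_inj' (by omega) (by omega)).mp (neg_inj.mp hh))), if_neg h]
    ring

/-- Per-`q` summand computation. -/
lemma summand_eq (r : ℕ) (J K : ℕ) (q : ℕ) (f : ZMod (2 * r) → ℂ) (m : ZMod (2 * r)) :
    ee (2 * r) ((q : ℤ) * ((J : ℤ) + (K : ℤ))) *
      ((Wl (2 * r) ((J : ℤ) - (K : ℤ)) (q : ℤ) 0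
        + Wl (2 * r) (-((J : ℤ) - (K : ℤ))) (-(q : ℤ)) 0) f m)
    = ee (2 * r) ((q : ℤ) * (2 * (J : ℤ) - 2 * (m.val : ℤ))) *
        f (m - (((J : ℤ) - (K : ℤ) : ℤ) : ZMod (2 * r)))
      + ee (2 * r) ((q : ℤ) * (2 * (J : ℤ) + 2 * (m.val : ℤ))) *
        f (m + (((J : ℤ) - (K : ℤ) : ℤ) : ZMod (2 * r))) := by
  have comb : ∀ (a b c : ℤ) (X : ℂ),
      ee (2 * r) a * (ee (2 * r) b * ee (2 * r) c * X) = ee (2 * r) (a + b + c) * X := by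
    intro a b c X
    rw [ee_add, ee_add]
    ring
  simp only [LinearMap.add_apply, Pi.add_apply, Wl_apply']
  rw [W_apply_ee, W_apply_ee, mul_add, comb, comb]
  have harg : m - ((-((J : ℤ) - (K : ℤ)) : ℤ) : ZMod (2 * r))
      = m + (((J : ℤ) - (K : ℤ) : ℤ) : ZMod (2 * r)) := by
    push_cast
    ring
  rw [harg]
  rw [show ((q : ℤ) * ((J : ℤ) + (K : ℤ)) + -(((J : ℤ) - (K : ℤ)) * (q : ℤ))
        + (-2 * (q : ℤ) * ((m.val : ℤ) - ((J : ℤ) - (K : ℤ)))))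
      = (q : ℤ) * (2 * (J : ℤ) - 2 * (m.val : ℤ)) from by ring]
  rw [show ((q : ℤ) * ((J : ℤ) + (K : ℤ)) + -(-((J : ℤ) - (K : ℤ)) * -(q : ℤ))
        + (-2 * -(q : ℤ) * ((m.val : ℤ) - -((J : ℤ) - (K : ℤ)))))
      = (q : ℤ) * (2 * (J : ℤ) + 2 * (m.val : ℤ)) from by ring]

/-- The key computation: the averaged Wilson-line operator acts on basis vectors as an
elementary operator. -/
lemma key_apply (r : ℕ) (hr : 2 ≤ r) (j k k' : Fin (r - 1)) :
    (∑ q ∈ Finset.range (2 * (2 * r)),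
      (((2 * (2 * r) : ℕ) : ℂ)⁻¹ *
          ee (2 * r) ((q : ℤ) * (((j.val + 1 : ℕ) : ℤ) + ((k.val + 1 : ℕ) : ℤ)))) •
        LinearMap.restrict
          (Wl (2 * r) (((j.val + 1 : ℕ) : ℤ) - ((k.val + 1 : ℕ) : ℤ)) (q : ℤ) 0
            + Wl (2 * r) (-(((j.val + 1 : ℕ) : ℤ) - ((k.val + 1 : ℕ) : ℤ))) (-(q : ℤ)) 0)
          (L_mem r (by omega) (((j.val + 1 : ℕ) : ℤ) - ((k.val + 1 : ℕ) : ℤ)) (q : ℤ)))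
      (oddVec r k')
    = if k = k' then oddVec r j else 0 := by
  haveI : NeZero (2 * r) := ⟨by omega⟩
  apply Subtype.ext
  rw [LinearMap.sum_apply, Submodule.coe_sum]
  funext m
  simp only [LinearMap.smul_apply, Submodule.coe_smul, LinearMap.restrict_apply,
    Finset.sum_apply, Pi.smul_apply, smul_eq_mul]
  have hovk : ((oddVec r k' : Vodd r) : ZMod (2 * r) → ℂ)
      = Efun (2 * r) ((k'.val + 1 : ℕ) : ZMod (2 * r)) := rfl
  rw [hovk]
  have hsummand : ∀ q ∈ Finset.range (2 * (2 * r)),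
      ((2 * (2 * r) : ℕ) : ℂ)⁻¹ * ee (2 * r) ((q : ℤ) * (((j.val + 1 : ℕ) : ℤ) + ((k.val + 1 : ℕ) : ℤ))) *
        ((Wl (2 * r) (((j.val + 1 : ℕ) : ℤ) - ((k.val + 1 : ℕ) : ℤ)) (q : ℤ) 0
          + Wl (2 * r) (-(((j.val + 1 : ℕ) : ℤ) - ((k.val + 1 : ℕ) : ℤ))) (-(q : ℤ)) 0)
          (Efun (2 * r) ((k'.val + 1 : ℕ) : ZMod (2 * r))) m)
      = ((2 * (2 * r) : ℕ) : ℂ)⁻¹ *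
          (ee (2 * r) ((q : ℤ) * (2 * ((j.val + 1 : ℕ) : ℤ) - 2 * (m.val : ℤ))) *
            Efun (2 * r) ((k'.val + 1 : ℕ) : ZMod (2 * r))
              (m - ((((j.val + 1 : ℕ) : ℤ) - ((k.val + 1 : ℕ) : ℤ) : ℤ) : ZMod (2 * r)))
          + ee (2 * r) ((q : ℤ) * (2 * ((j.val + 1 : ℕ) : ℤ) + 2 * (m.val : ℤ))) *
            Efun (2 * r) ((k'.val + 1 : ℕ) : ZMod (2 * r))
              (m + ((((j.val + 1 : ℕ) : ℤ) - ((k.val + 1 : ℕ) : ℤ) : ℤ) : ZMod (2 * r)))) := by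
    intro q _
    rw [mul_assoc, summand_eq r (j.val + 1) (k.val + 1) q]
  rw [Finset.sum_congr rfl hsummand, ← Finset.mul_sum, Finset.sum_add_distrib,
    ← Finset.sum_mul, ← Finset.sum_mul, ee_geom_sum (2 * r) (by omega),
    ee_geom_sum (2 * r) (by omega)]
  have hc1 : ((2 * ((2 * r : ℕ) : ℤ)) ∣ (2 * ((j.val + 1 : ℕ) : ℤ) - 2 * (m.val : ℤ)))
      ↔ m = ((j.val + 1 : ℕ) : ZMod (2 * r)) := by
    rw [show (2 * ((j.val + 1 : ℕ) : ℤ) - 2 * (m.val : ℤ))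
        = 2 * (((j.val + 1 : ℕ) : ℤ) - (m.val : ℤ)) from by ring,
      mul_dvd_mul_iff_left (two_ne_zero (α := ℤ))]
    exact dvd_sub_iff_cast m (j.val + 1)
  have hc2 : ((2 * ((2 * r : ℕ) : ℤ)) ∣ (2 * ((j.val + 1 : ℕ) : ℤ) + 2 * (m.val : ℤ)))
      ↔ m = -((j.val + 1 : ℕ) : ZMod (2 * r)) := by
    rw [show (2 * ((j.val + 1 : ℕ) : ℤ) + 2 * (m.val : ℤ))
        = 2 * (((j.val + 1 : ℕ) : ℤ) + (m.val : ℤ)) from by ring,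
      mul_dvd_mul_iff_left (two_ne_zero (α := ℤ))]
    exact dvd_add_iff_cast m (j.val + 1)
  have hRHS : (((if k = k' then oddVec r j else 0 : Vodd r)) : ZMod (2 * r) → ℂ) m
      = if k = k' then Efun (2 * r) ((j.val + 1 : ℕ) : ZMod (2 * r)) m else 0 := by
    by_cases h : k = k'
    · rw [if_pos h, if_pos h]; rfl
    · rw [if_neg h, if_neg h]; rfl
  rw [hRHS]
  have hkval : (k.val + 1 = k'.val + 1) ↔ (k = k') := by
    constructor
    · intro h; ext; omega
    · intro h; rw [h]
  by_cases hm1 : m = ((j.val + 1 : ℕ) : ZMod (2 * r))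
  · have hm2 : ¬ (m = -((j.val + 1 : ℕ) : ZMod (2 * r))) := by
      rw [hm1]
      exact natCast_ne_neg (by omega) (by omega)
    have harg : m - ((((j.val + 1 : ℕ) : ℤ) - ((k.val + 1 : ℕ) : ℤ) : ℤ) : ZMod (2 * r))
        = ((k.val + 1 : ℕ) : ZMod (2 * r)) := by
      rw [hm1]; push_cast; ring
    rw [if_pos (hc1.mpr hm1), if_neg (fun h => hm2 (hc2.mp h)), harg, hm1,
      Efun_eval_pos hr (by omega) (by omega) (by omega) (by omega),
      Efun_eval_pos hr (by omega) (by omega) (by omega) (by omega)]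
    by_cases hkk : k = k'
    · rw [if_pos (hkval.mpr hkk), if_pos hkk, if_pos rfl]
      have h4r : ((2 * (2 * r) : ℕ) : ℂ) ≠ 0 := Nat.cast_ne_zero.mpr (by omega)
      have hrC : ((r : ℕ) : ℂ) ≠ 0 := Nat.cast_ne_zero.mpr (by omega)
      field_simp
      ring
    · rw [if_neg (fun h => hkk (hkval.mp h)), if_neg hkk]
      ring
  · by_cases hm2 : m = -((j.val + 1 : ℕ) : ZMod (2 * r))
    · have harg : m + ((((j.val + 1 : ℕ) : ℤ) - ((k.val + 1 : ℕ) : ℤ) : ℤ) : ZMod (2 * r))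
          = -((k.val + 1 : ℕ) : ZMod (2 * r)) := by
        rw [hm2]; push_cast; ring
      rw [if_neg (fun h => hm1 (hc1.mp h)), if_pos (hc2.mpr hm2), harg, hm2,
        Efun_eval_neg hr (by omega) (by omega) (by omega) (by omega),
        Efun_eval_neg hr (by omega) (by omega) (by omega) (by omega)]
      by_cases hkk : k = k'
      · rw [if_pos (hkval.mpr hkk), if_pos hkk, if_pos rfl]
        have h4r : ((2 * (2 * r) : ℕ) : ℂ) ≠ 0 := Nat.cast_ne_zero.mpr (by omega)
        have hrC : ((r : ℕ) : ℂ) ≠ 0 := Nat.cast_ne_zero.mpr (by omega)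
        field_simp
        ring
      · rw [if_neg (fun h => hkk (hkval.mp h)), if_neg hkk]
        ring
    · rw [if_neg (fun h => hm1 (hc1.mp h)), if_neg (fun h => hm2 (hc2.mp h))]
      have hEz : Efun (2 * r) ((j.val + 1 : ℕ) : ZMod (2 * r)) m = 0 := by
        unfold Efun
        rw [if_neg hm1, if_neg hm2]
        ring
      rw [hEz]
      by_cases hkk : k = k'
      · rw [if_pos hkk]; ring
      · rw [if_neg hkk]; ring

/-- the odd subspace `V_odd ⊂ (ZMod 2r → ℂ)` has dimension `r−1`, the
quantized Wilson lines `L_{p,q} = W(p,q,0) + W(−p,−q,0)` map `V_odd` into itself, and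
the restrictions of the `L_{p,q}` to `V_odd` span the space of ALL linear
endomorphisms of `V_odd`. -/
theorem wilson_lines_span_all_operators (r : ℕ) (hr : 2 ≤ r) :
    Module.finrank ℂ (Vodd r) = r - 1 ∧
    (∀ p q : ℤ, ∀ f ∈ Vodd r,
      (Wl (2 * r) p q 0 + Wl (2 * r) (-p) (-q) 0) f ∈ Vodd r) ∧
    Submodule.span ℂ
        {g : Module.End ℂ (Vodd r) |
          ∃ (p q : ℤ)
            (h : ∀ f ∈ Vodd r, (Wl (2 * r) p q 0 + Wl (2 * r) (-p) (-q) 0) f ∈ Vodd r),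
            g = LinearMap.restrict (Wl (2 * r) p q 0 + Wl (2 * r) (-p) (-q) 0) h} = ⊤ := by
  refine ⟨?_, fun p q => L_mem r (by omega) p q, ?_⟩
  · rw [Module.finrank_eq_card_basis (oddBasis r hr)]
    simp
  · rw [eq_top_iff]
    intro T _
    set b := oddBasis r hr with hbdef
    have hbv : ∀ i, b i = oddVec r i := fun i => by
      rw [hbdef, oddBasis, Module.Basis.mk_apply]
    have hA : ∀ j k : Fin (r - 1), ∃ A : Module.End ℂ (Vodd r),
        A ∈ Submodule.span ℂ
          {g : Module.End ℂ (Vodd r) |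
            ∃ (p q : ℤ)
              (h : ∀ f ∈ Vodd r, (Wl (2 * r) p q 0 + Wl (2 * r) (-p) (-q) 0) f ∈ Vodd r),
              g = LinearMap.restrict (Wl (2 * r) p q 0 + Wl (2 * r) (-p) (-q) 0) h} ∧
        ∀ k', A (b k') = if k = k' then b j else 0 := by
      intro j k
      refine ⟨∑ q ∈ Finset.range (2 * (2 * r)),
        (((2 * (2 * r) : ℕ) : ℂ)⁻¹ *
            ee (2 * r) ((q : ℤ) * (((j.val + 1 : ℕ) : ℤ) + ((k.val + 1 : ℕ) : ℤ)))) •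
          LinearMap.restrict
            (Wl (2 * r) (((j.val + 1 : ℕ) : ℤ) - ((k.val + 1 : ℕ) : ℤ)) (q : ℤ) 0
              + Wl (2 * r) (-(((j.val + 1 : ℕ) : ℤ) - ((k.val + 1 : ℕ) : ℤ))) (-(q : ℤ)) 0)
            (L_mem r (by omega) (((j.val + 1 : ℕ) : ℤ) - ((k.val + 1 : ℕ) : ℤ)) (q : ℤ)), ?_, ?_⟩
      · exact Submodule.sum_mem _ fun q _ => Submodule.smul_mem _ _
          (Submodule.subset_span ⟨_, _, L_mem r (by omega) _ _, rfl⟩)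
      · intro k'
        rw [hbv k', hbv j]
        exact key_apply r hr j k k'
    choose A hAmem hAapp using hA
    have hTsum : T = ∑ j : Fin (r - 1), ∑ k : Fin (r - 1), (b.repr (T (b k)) j) • A j k := by
      apply b.ext
      intro k'
      simp only [LinearMap.sum_apply, LinearMap.smul_apply, hAapp, smul_ite, smul_zero,
        Finset.sum_ite_eq', Finset.mem_univ, if_true]
      exact (b.sum_repr (T (b k'))).symm
    rw [hTsum]
    exact Submodule.sum_mem _ fun j _ => Submodule.sum_mem _ fun k _ =>
      Submodule.smul_mem _ _ (hAmem j k)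
end
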